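/- arXiv:2305.02406 — 5 statements merged into one kernel-verified Lean document; each statement's English description precedes it below -/
import Mathlib

section
/- Let G be a graph on [n], 2 ≤ k ≤ n, and σ a k-subset of [n]. Then ∑_{u ∈ σ} d_{k−1}(σ∖{u}) = (k−1)·d_k(σ) + 2·|E_σ|, where d_j denotes the degree in the j-th token graph F_j(G) and E_σ = {e ∈ E(G) : e ⊆ σ}. -/
set_option maxHeartbeats 1000000


open Finset

/-- The `k`-th token graph of a graph `G` on `[n]` = `Fin n`: vertices are the `k`-subsets of
`[n]`, and `A, B` are adjacent iff `|A ∩ B| = k - 1` and `A △ B` is an edge of `G`. -/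
def tokenGraph (n k : ℕ) (G : SimpleGraph (Fin n)) :
    SimpleGraph {s : Finset (Fin n) // s.card = k} :=
  SimpleGraph.fromRel (fun A B =>
    (A.1 ∩ B.1).card = k - 1 ∧ ∃ u v, G.Adj u v ∧ symmDiff A.1 B.1 = {u, v})

noncomputable instance (n k : ℕ) (G : SimpleGraph (Fin n)) :
    DecidableRel (tokenGraph n k G).Adj := Classical.decRel _

/-- Laplacian matrix of the `k`-th token graph. -/
noncomputable def lapTok (n k : ℕ) (G : SimpleGraph (Fin n)) :
    Matrix {s : Finset (Fin n) // s.card = k} {s : Finset (Fin n) // s.card = k} ℝ :=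
  SimpleGraph.lapMatrix ℝ (tokenGraph n k G)

open scoped Classical

lemma tokenGraph_adj (n j : ℕ) (G : SimpleGraph (Fin n))
    (A B : {s : Finset (Fin n) // s.card = j}) :
    (tokenGraph n j G).Adj A B ↔ A ≠ B ∧ (A.1 ∩ B.1).card = j - 1 ∧
      ∃ u v, G.Adj u v ∧ symmDiff A.1 B.1 = {u, v} := by
  rw [tokenGraph, SimpleGraph.fromRel_adj]
  constructor
  · rintro ⟨hne, h | h⟩
    · exact ⟨hne, h⟩
    · refine ⟨hne, by rw [Finset.inter_comm]; exact h.1, ?_⟩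
      obtain ⟨u, v, huv, hs⟩ := h.2
      exact ⟨u, v, huv, by rwa [symmDiff_comm]⟩
  · rintro ⟨hne, h1, h2⟩
    exact ⟨hne, Or.inl ⟨h1, h2⟩⟩

lemma deg_token (n j : ℕ) (G : SimpleGraph (Fin n)) (A : Finset (Fin n)) (hA : A.card = j) :
    (tokenGraph n j G).degree ⟨A, hA⟩
      = ((A ×ˢ Aᶜ).filter fun p => G.Adj p.1 p.2).card := by
  rw [← SimpleGraph.card_neighborFinset_eq_degree]
  symm
  have key : ∀ p : Fin n × Fin n, p ∈ (A ×ˢ Aᶜ).filter (fun p => G.Adj p.1 p.2) →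
      (insert p.2 (A.erase p.1)).card = j := by
    rintro ⟨a, b⟩ hp
    simp only [mem_filter, mem_product, mem_compl] at hp
    rw [Finset.card_insert_of_notMem (fun hb => hp.1.2 (Finset.mem_of_mem_erase hb)),
      Finset.card_erase_of_mem hp.1.1, hA]
    have : 1 ≤ j := hA ▸ Finset.card_pos.2 ⟨a, hp.1.1⟩
    omega
  apply Finset.card_bij (fun p hp => (⟨insert p.2 (A.erase p.1), key p hp⟩ :
    {s : Finset (Fin n) // s.card = j}))
  · rintro ⟨a, b⟩ hp
    simp only [mem_filter, mem_product, mem_compl] at hp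
    obtain ⟨⟨haA, hbA⟩, hadj⟩ := hp
    have hab : a ≠ b := fun h => hbA (h ▸ haA)
    rw [SimpleGraph.mem_neighborFinset, tokenGraph_adj]
    refine ⟨?_, ?_, a, b, hadj, ?_⟩
    · intro h
      apply hbA
      have h' : A = insert b (A.erase a) := congrArg Subtype.val h
      rw [h']
      exact Finset.mem_insert_self _ _
    · have h' : A ∩ insert b (A.erase a) = A.erase a := by
        ext x
        simp only [Finset.mem_inter, Finset.mem_insert, Finset.mem_erase]
        constructor
        · rintro ⟨hx, rfl | hx'⟩
          · exact absurd hx hbA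
          · exact hx'
        · rintro ⟨hxa, hx⟩; exact ⟨hx, Or.inr ⟨hxa, hx⟩⟩
      rw [h', Finset.card_erase_of_mem haA, hA]
    · ext x
      simp only [Finset.mem_symmDiff, Finset.mem_insert, Finset.mem_erase,
        Finset.mem_singleton]
      constructor
      · rintro (⟨hx, hx2⟩ | ⟨rfl | ⟨hxa, hx⟩, hx2⟩)
        · left
          by_contra hxa
          exact hx2 (Or.inr ⟨hxa, hx⟩)
        · right; rfl
        · exact absurd hx hx2
      · rintro (rfl | rfl)
        · refine Or.inl ⟨haA, ?_⟩
          rintro (rfl | ⟨h, _⟩)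
          · exact hbA haA
          · exact h rfl
        · exact Or.inr ⟨Or.inl rfl, hbA⟩
  · rintro ⟨a, b⟩ hp ⟨c, d⟩ hq h
    simp only [mem_filter, mem_product, mem_compl] at hp hq
    have h' : insert b (A.erase a) = insert d (A.erase c) := congrArg Subtype.val h
    have hbd : b = d := by
      have hb : b ∈ insert d (A.erase c) := h' ▸ Finset.mem_insert_self _ _
      rcases Finset.mem_insert.1 hb with h1 | h1
      · exact h1
      · exact absurd (Finset.mem_of_mem_erase h1) hp.1.2
    subst hbd
    have hac : A.erase a = A.erase c := by
      have h1 : b ∉ A.erase a := fun h => hp.1.2 (Finset.mem_of_mem_erase h)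
      have h2 : b ∉ A.erase c := fun h => hq.1.2 (Finset.mem_of_mem_erase h)
      ext x
      constructor
      · intro hx
        have hx' : x ∈ insert b (A.erase c) := h' ▸ Finset.mem_insert_of_mem hx
        rcases Finset.mem_insert.1 hx' with rfl | hxc
        · exact absurd hx h1
        · exact hxc
      · intro hx
        have hx' : x ∈ insert b (A.erase a) := h'.symm ▸ Finset.mem_insert_of_mem hx
        rcases Finset.mem_insert.1 hx' with rfl | hxa
        · exact absurd hx h2
        · exact hxa
    have hac' : a = c := by
      by_contra hne
      have hmem : a ∈ A.erase c := Finset.mem_erase.2 ⟨hne, hp.1.1⟩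
      rw [← hac] at hmem
      exact (Finset.mem_erase.1 hmem).1 rfl
    simp [hac']
  · intro B hB
    rw [SimpleGraph.mem_neighborFinset, tokenGraph_adj] at hB
    obtain ⟨hne, hcard, u, v, huv, hsd⟩ := hB
    have huvne : u ≠ v := huv.ne
    have hsum : (A \ B.1).card + (B.1 \ A).card = 2 := by
      rw [← Finset.card_union_of_disjoint disjoint_sdiff_sdiff,
        ← Finset.sup_eq_union, ← symmDiff_def, hsd,
        Finset.card_insert_of_notMem (by simpa using huvne), Finset.card_singleton]
    have e1 : (A \ B.1).card + (A ∩ B.1).card = A.card := Finset.card_sdiff_add_card_inter A B.1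
    have e2 : (B.1 \ A).card + (B.1 ∩ A).card = B.1.card := Finset.card_sdiff_add_card_inter B.1 A
    rw [Finset.inter_comm] at e2
    have hA1 : (A \ B.1).card = 1 ∧ (B.1 \ A).card = 1 := by
      rw [hA] at e1; rw [B.2] at e2; omega
    obtain ⟨a, ha⟩ := Finset.card_eq_one.1 hA1.1
    obtain ⟨b, hb⟩ := Finset.card_eq_one.1 hA1.2
    have haA : a ∈ A ∧ a ∉ B.1 := by
      have : a ∈ A \ B.1 := ha ▸ Finset.mem_singleton_self a
      exact Finset.mem_sdiff.1 this
    have hbB : b ∈ B.1 ∧ b ∉ A := by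
      have : b ∈ B.1 \ A := hb ▸ Finset.mem_singleton_self b
      exact Finset.mem_sdiff.1 this
    have hab : a ≠ b := fun h => haA.2 (h ▸ hbB.1)
    have hpair : ({a, b} : Finset (Fin n)) = {u, v} := by
      rw [← hsd, symmDiff_def, Finset.sup_eq_union, ha, hb]
      rfl
    have hadj : G.Adj a b := by
      have hau : a ∈ ({u, v} : Finset (Fin n)) := hpair ▸ Finset.mem_insert_self a {b}
      have hbu : b ∈ ({u, v} : Finset (Fin n)) := hpair ▸
        Finset.mem_insert_of_mem (Finset.mem_singleton_self b)
      simp only [Finset.mem_insert, Finset.mem_singleton] at hau hbu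
      rcases hau with rfl | rfl
      · rcases hbu with rfl | rfl
        · exact absurd rfl hab
        · exact huv
      · rcases hbu with rfl | rfl
        · exact huv.symm
        · exact absurd rfl hab
    refine ⟨(a, b), ?_, ?_⟩
    · simp only [mem_filter, mem_product, mem_compl]
      exact ⟨⟨haA.1, hbB.2⟩, hadj⟩
    · apply Subtype.ext
      show insert b (A.erase a) = B.1
      calc insert b (A.erase a) = {b} ∪ (A \ {a}) := by
            rw [Finset.insert_eq, Finset.erase_eq]
        _ = (B.1 \ A) ∪ (A \ (A \ B.1)) := by rw [ha, hb]
        _ = (B.1 \ A) ∪ (B.1 ∩ A) := by rw [Finset.sdiff_sdiff_self_left, Finset.inter_comm]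
        _ = B.1 \ A ∪ B.1 ∩ A := rfl
        _ = B.1 := Finset.sdiff_union_inter _ _

/-- `G` restricted to edges inside `σ`. -/
def inducedOn (n : ℕ) (G : SimpleGraph (Fin n)) (σ : Finset (Fin n)) : SimpleGraph (Fin n) where
  Adj a b := G.Adj a b ∧ a ∈ σ ∧ b ∈ σ
  symm := ⟨fun a b ⟨h, ha, hb⟩ => ⟨h.symm, hb, ha⟩⟩
  loopless := ⟨fun a ⟨h, _⟩ => G.loopless.irrefl a h⟩

lemma two_mul_Esigma (n : ℕ) (G : SimpleGraph (Fin n)) (σ : Finset (Fin n)) :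
    2 * (G.edgeFinset.filter (fun e => ∀ v ∈ e, v ∈ σ)).card
      = ∑ p : Fin n × Fin n, if G.Adj p.1 p.2 ∧ p.1 ∈ σ ∧ p.2 ∈ σ then 1 else 0 := by
  have hE : (inducedOn n G σ).edgeFinset = G.edgeFinset.filter (fun e => ∀ v ∈ e, v ∈ σ) := by
    ext e
    induction e with
    | _ x y =>
      simp only [SimpleGraph.mem_edgeFinset, mem_filter, SimpleGraph.mem_edgeSet,
        Sym2.mem_iff, forall_eq_or_imp, forall_eq]
      show (G.Adj x y ∧ x ∈ σ ∧ y ∈ σ) ↔ _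
      tauto
  rw [← hE, SimpleGraph.two_mul_card_edgeFinset, Finset.card_filter]
  apply Finset.sum_congr rfl
  rintro ⟨x, y⟩ _
  exact if_congr Iff.rfl rfl rfl

/-- `∑_{u∈σ} d_{k-1}(σ \ {u}) = (k-1) d_k(σ) + 2 |E_σ|`. -/
theorem sum_degree_erase (n k : ℕ) (G : SimpleGraph (Fin n)) (hk : 2 ≤ k) (hkn : k ≤ n)
    (σ : {s : Finset (Fin n) // s.card = k}) :
    ∑ u ∈ σ.1.attach,
        (tokenGraph n (k - 1) G).degree
          ⟨σ.1.erase u.1, by rw [Finset.card_erase_of_mem u.2, σ.2]⟩ =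
      (k - 1) * (tokenGraph n k G).degree σ +
        2 * (G.edgeFinset.filter (fun e => ∀ v ∈ e, v ∈ σ.1)).card := by
  have hdeg : ∀ (S : Finset (Fin n)) (j : ℕ) (hS : S.card = j),
      (tokenGraph n j G).degree ⟨S, hS⟩
        = ∑ p : Fin n × Fin n, if p.1 ∈ S ∧ p.2 ∉ S ∧ G.Adj p.1 p.2 then 1 else 0 := by
    intro S j hS
    rw [deg_token n j G S hS]
    have : (S ×ˢ Sᶜ).filter (fun p => G.Adj p.1 p.2)
        = univ.filter (fun p : Fin n × Fin n => p.1 ∈ S ∧ p.2 ∉ S ∧ G.Adj p.1 p.2) := by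
      ext p
      simp only [mem_filter, mem_product, mem_compl, mem_univ, true_and]
      tauto
    rw [this, Finset.card_filter]
  calc ∑ u ∈ σ.1.attach,
        (tokenGraph n (k - 1) G).degree
          ⟨σ.1.erase u.1, by rw [Finset.card_erase_of_mem u.2, σ.2]⟩
      = ∑ u ∈ σ.1.attach, ∑ p : Fin n × Fin n,
          if p.1 ∈ σ.1.erase u.1 ∧ p.2 ∉ σ.1.erase u.1 ∧ G.Adj p.1 p.2 then 1 else 0 := by
        exact Finset.sum_congr rfl fun u _ => hdeg _ _ _
    _ = ∑ x ∈ σ.1, ∑ p : Fin n × Fin n,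
          if p.1 ∈ σ.1.erase x ∧ p.2 ∉ σ.1.erase x ∧ G.Adj p.1 p.2 then 1 else 0 :=
        Finset.sum_attach σ.1 (fun x => ∑ p : Fin n × Fin n,
          if p.1 ∈ σ.1.erase x ∧ p.2 ∉ σ.1.erase x ∧ G.Adj p.1 p.2 then 1 else 0)
    _ = ∑ p : Fin n × Fin n, ∑ x ∈ σ.1,
          if p.1 ∈ σ.1.erase x ∧ p.2 ∉ σ.1.erase x ∧ G.Adj p.1 p.2 then 1 else 0 :=
        Finset.sum_comm
    _ = ∑ p : Fin n × Fin n,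
          ((if p.1 ∈ σ.1 ∧ p.2 ∉ σ.1 ∧ G.Adj p.1 p.2 then (k - 1) else 0)
            + (if G.Adj p.1 p.2 ∧ p.1 ∈ σ.1 ∧ p.2 ∈ σ.1 then 1 else 0)) := by
        apply Finset.sum_congr rfl
        rintro ⟨a, b⟩ _
        dsimp only
        by_cases hadj : G.Adj a b
        · have hab : a ≠ b := hadj.ne
          by_cases ha : a ∈ σ.1
          · by_cases hb : b ∈ σ.1
            · -- count is 1, achieved at x = b
              have hcond : ∀ x ∈ σ.1,
                  (a ∈ σ.1.erase x ∧ b ∉ σ.1.erase x ∧ G.Adj a b) = (x = b) := by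
                intro x hx
                simp only [Finset.mem_erase, eq_iff_iff]
                constructor
                · rintro ⟨⟨hax, _⟩, hbx, _⟩
                  by_contra hxb
                  exact hbx ⟨fun h => hxb h.symm, hb⟩
                · rintro rfl
                  exact ⟨⟨hab, ha⟩, fun h => h.1 rfl, hadj⟩
              rw [Finset.sum_congr rfl (fun x hx => if_congr (iff_of_eq (hcond x hx)) rfl rfl)]
              rw [Finset.sum_ite_eq' σ.1 b (fun _ => 1), if_pos hb]
              simp [ha, hb, hadj, hab]
            · -- count is k - 1
              have hcond : ∀ x ∈ σ.1,
                  (a ∈ σ.1.erase x ∧ b ∉ σ.1.erase x ∧ G.Adj a b) = ¬(x = a) := by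
                intro x hx
                simp only [Finset.mem_erase, eq_iff_iff]
                constructor
                · rintro ⟨⟨hax, _⟩, _, _⟩ rfl
                  exact hax rfl
                · intro hxa
                  exact ⟨⟨fun h => hxa h.symm, ha⟩, fun h => hb h.2, hadj⟩
              rw [Finset.sum_congr rfl (fun x hx => if_congr (iff_of_eq (hcond x hx)) rfl rfl)]
              rw [← Finset.card_filter]
              have : σ.1.filter (fun x => ¬(x = a)) = σ.1.erase a := by
                ext x
                simp only [mem_filter, Finset.mem_erase]
                tauto
              rw [this, Finset.card_erase_of_mem ha, σ.2]
              simp [ha, hb, hadj]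
          · -- a ∉ σ: everything is 0
            have : ∀ x ∈ σ.1,
                (if a ∈ σ.1.erase x ∧ b ∉ σ.1.erase x ∧ G.Adj a b then 1 else 0) = 0 := by
              intro x _
              rw [if_neg]
              rintro ⟨h1, _⟩
              exact ha (Finset.mem_of_mem_erase h1)
            rw [Finset.sum_congr rfl this, Finset.sum_const_zero]
            simp [ha]
        · simp [hadj]
    _ = (k - 1) * (tokenGraph n k G).degree σ +
        2 * (G.edgeFinset.filter (fun e => ∀ v ∈ e, v ∈ σ.1)).card := by
        rw [Finset.sum_add_distrib, hdeg σ.1 k σ.2, Finset.mul_sum, two_mul_Esigma]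
        congr 1
        apply Finset.sum_congr rfl
        intro p _
        rw [mul_ite, mul_one, mul_zero]
end

section
/- Let G be a graph on [n], 2 ≤ k ≤ n, and φ ∈ ℝ^{C(n,k)}. Then (k−1)·⟨L_k φ, φ⟩ = ∑_{u=1}^n ⟨L_{k−1} φ_u, φ_u⟩ − 2⟨D_k φ, φ⟩, where L_j is the Laplacian of the j-th token graph F_j(G), φ_u(τ) = φ(τ ∪ {u}) for u ∉ τ and 0 otherwise, and D_k is the diagonal matrix with (D_k)_{σ,σ} = |{e ∈ E(G) : e ⊆ σ}|. -/
open Finset Matrix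

/-- For `φ` on `k`-subsets of `[n]` and `u ∈ [n]`, the vector `φ_u` on `(k-1)`-subsets:
`φ_u(τ) = φ(τ ∪ {u})` if `u ∉ τ`, and `0` if `u ∈ τ`. -/
def phiU (n k : ℕ) (hk : 1 ≤ k) (φ : {s : Finset (Fin n) // s.card = k} → ℝ) (u : Fin n)
    (τ : {s : Finset (Fin n) // s.card = k - 1}) : ℝ :=
  if h : u ∈ τ.1 then 0
  else φ ⟨insert u τ.1, by rw [Finset.card_insert_of_notMem h, τ.2]; omega⟩

open scoped Classical in
/-- The diagonal matrix `D_k` with `(D_k)_{σ,σ} = |E_σ|`, the number of edges of `G`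
contained in `σ`. -/
noncomputable def Dmat (n k : ℕ) (G : SimpleGraph (Fin n)) :
    Matrix {s : Finset (Fin n) // s.card = k} {s : Finset (Fin n) // s.card = k} ℝ :=
  Matrix.diagonal fun σ => ((G.edgeFinset.filter (fun e => ∀ v ∈ e, v ∈ σ.1)).card : ℝ)


open scoped Classical

namespace Garland
variable {n : ℕ} (G : SimpleGraph (Fin n))

def Pad (A B : Finset (Fin n)) : Prop := ∃ x y, G.Adj x y ∧ symmDiff A B = {x, y}

lemma pad_symm {A B : Finset (Fin n)} (h : Pad G A B) : Pad G B A := by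
  obtain ⟨x, y, hxy, hd⟩ := h
  exact ⟨x, y, hxy, by rwa [symmDiff_comm]⟩

lemma pad_facts {j : ℕ} {A B : Finset (Fin n)} (hA : A.card = j) (hB : B.card = j)
    (h : Pad G A B) : (A ∩ B).card = j - 1 ∧ A ≠ B := by
  obtain ⟨x, y, hxy, hd⟩ := h
  have hne : A ≠ B := by
    intro hAB
    rw [hAB, symmDiff_self] at hd
    have : x ∈ ({x, y} : Finset (Fin n)) := by simp
    rw [← hd] at this
    simp at this
  have hcard2 : (symmDiff A B).card = 2 := by
    rw [hd, Finset.card_insert_of_notMem (by simp [hxy.ne]), Finset.card_singleton]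
  have hsd : symmDiff A B = (A ∪ B) \ (A ∩ B) := symmDiff_eq_sup_sdiff_inf A B
  have h1 : (A ∪ B).card + (A ∩ B).card = A.card + B.card := Finset.card_union_add_card_inter A B
  have h2 : (symmDiff A B).card = (A ∪ B).card - (A ∩ B).card := by
    rw [hsd, Finset.card_sdiff_of_subset (Finset.inter_subset_union)]
  have h3 : (A ∩ B).card ≤ (A ∪ B).card := Finset.card_le_card Finset.inter_subset_union
  exact ⟨by omega, hne⟩

lemma adj_iff {j : ℕ} (A B : {s : Finset (Fin n) // s.card = j}) :
    (tokenGraph n j G).Adj A B ↔ Pad G A.1 B.1 := by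
  rw [tokenGraph, SimpleGraph.fromRel_adj]
  constructor
  · rintro ⟨hne, h | h⟩
    · exact h.2
    · exact pad_symm G h.2
  · intro h
    have := pad_facts G A.2 B.2 h
    exact ⟨fun hAB => this.2 (congrArg Subtype.val hAB), Or.inl ⟨this.1, h⟩⟩

end Garland
open scoped Classical

namespace Garland
variable {n : ℕ} (G : SimpleGraph (Fin n))

lemma symmDiff_insert_insert {u : Fin n} {A B : Finset (Fin n)} (hA : u ∉ A) (hB : u ∉ B) :
    symmDiff (insert u A) (insert u B) = symmDiff A B := by
  ext v
  simp only [Finset.mem_symmDiff, Finset.mem_insert]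
  by_cases hv : v = u
  · subst hv; simp [hA, hB]
  · simp [hv]

lemma symmDiff_erase_erase {u : Fin n} {A B : Finset (Fin n)} (hA : u ∈ A) (hB : u ∈ B) :
    symmDiff (A.erase u) (B.erase u) = symmDiff A B := by
  ext v
  simp only [Finset.mem_symmDiff, Finset.mem_erase]
  by_cases hv : v = u
  · subst hv; simp [hA, hB]
  · simp [hv]

lemma symmDiff_erase_pair {u x : Fin n} {A : Finset (Fin n)} (hu : u ∈ A) (hx : x ∈ A)
    (hux : u ≠ x) : symmDiff (A.erase u) (A.erase x) = {u, x} := by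
  ext v
  simp only [Finset.mem_symmDiff, Finset.mem_erase, Finset.mem_insert, Finset.mem_singleton]
  constructor
  · rintro (⟨⟨hvu, hvA⟩, h⟩ | ⟨⟨hvx, hvA⟩, h⟩)
    · right; by_contra hvx; exact h ⟨hvx, hvA⟩
    · left; by_contra hvu; exact h ⟨hvu, hvA⟩
  · rintro (rfl | rfl)
    · exact Or.inr ⟨⟨hux, hu⟩, fun h => h.1 rfl⟩
    · exact Or.inl ⟨⟨fun h => hux h.symm, hx⟩, fun h => h.1 rfl⟩

/-- Structure of a `Pad`-pair where `u` is in exactly one side. -/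
lemma cross_structure {k : ℕ} {u : Fin n} {τ τ' : Finset (Fin n)}
    (hτ : τ.card = k) (hτ' : τ'.card = k) (huτ : u ∉ τ) (huτ' : u ∈ τ')
    (h : Pad G τ τ') : ∃ x, G.Adj u x ∧ x ∈ τ ∧ x ∉ τ' ∧ τ' = (insert u τ).erase x := by
  obtain ⟨a, b, hab, hd⟩ := h
  have humem : u ∈ symmDiff τ τ' := by
    simp [Finset.mem_symmDiff, huτ, huτ']
  rw [hd] at humem
  simp only [Finset.mem_insert, Finset.mem_singleton] at humem
  -- wlog: get x with Adj u x and symmDiff = {u, x}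
  obtain ⟨x, hux, hdx⟩ : ∃ x, G.Adj u x ∧ symmDiff τ τ' = {u, x} := by
    rcases humem with rfl | rfl
    · exact ⟨b, hab, hd⟩
    · exact ⟨a, hab.symm, by rw [hd, Finset.pair_comm]⟩
  have hxne : x ≠ u := fun h => (G.irrefl (h ▸ hux))
  have hxmem : x ∈ symmDiff τ τ' := by rw [hdx]; simp
  have hxτ : x ∈ τ ∧ x ∉ τ' := by
    rw [Finset.mem_symmDiff] at hxmem
    rcases hxmem with h1 | h1
    · exact h1
    · exfalso
      -- x ∈ τ' \ τ ⇒ τ ⊆ τ' ⇒ τ = τ' ⇒ symmDiff empty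
      have hsub : τ ⊆ τ' := by
        intro v hv
        by_contra hv'
        have : v ∈ symmDiff τ τ' := by simp [Finset.mem_symmDiff, hv, hv']
        rw [hdx] at this
        simp only [Finset.mem_insert, Finset.mem_singleton] at this
        rcases this with rfl | rfl
        · exact huτ hv
        · exact h1.2 hv
      have heq : τ = τ' := Finset.eq_of_subset_of_card_le hsub (by omega)
      rw [heq, symmDiff_self] at hdx
      have : u ∈ (⊥ : Finset (Fin n)) := by rw [hdx]; simp
      simp at this
  refine ⟨x, hux, hxτ.1, hxτ.2, ?_⟩
  ext v
  simp only [Finset.mem_erase, Finset.mem_insert]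
  constructor
  · intro hv
    have hvx : v ≠ x := fun h => hxτ.2 (h ▸ hv)
    refine ⟨hvx, ?_⟩
    by_cases hvu : v = u
    · exact Or.inl hvu
    · right
      by_contra hvτ
      have : v ∈ symmDiff τ τ' := by simp [Finset.mem_symmDiff, hv, hvτ]
      rw [hdx] at this
      simp only [Finset.mem_insert, Finset.mem_singleton] at this
      tauto
  · rintro ⟨hvx, rfl | hvτ⟩
    · exact huτ'
    · by_contra hvτ'
      have : v ∈ symmDiff τ τ' := by simp [Finset.mem_symmDiff, hvτ, hvτ']
      rw [hdx] at this
      simp only [Finset.mem_insert, Finset.mem_singleton] at this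
      rcases this with rfl | rfl
      · exact huτ hvτ
      · exact hvx rfl

end Garland
open scoped Classical

namespace Garland
variable {n : ℕ} (G : SimpleGraph (Fin n))

lemma quad_form {V : Type*} [Fintype V] [DecidableEq V] (H : SimpleGraph V)
    [DecidableRel H.Adj] (x : V → ℝ) :
    H.lapMatrix ℝ *ᵥ x ⬝ᵥ x = (∑ i : V, ∑ j : V, if H.Adj i j then (x i - x j)^2 else 0) / 2 := by
  rw [dotProduct_comm, ← Matrix.toLinearMap₂'_apply', SimpleGraph.lapMatrix_toLinearMap₂']

lemma edge_count (A : Finset (Fin n)) :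
    ((Finset.univ : Finset (Fin n × Fin n)).filter
        (fun p => p.1 ∈ A ∧ p.2 ∈ A ∧ G.Adj p.1 p.2)).card
      = 2 * (G.edgeFinset.filter (fun e => ∀ v ∈ e, v ∈ A)).card := by
  set H : SimpleGraph (Fin n) := SimpleGraph.fromRel (fun u v => G.Adj u v ∧ u ∈ A ∧ v ∈ A)
    with hH
  have hHadj : ∀ u v, H.Adj u v ↔ u ∈ A ∧ v ∈ A ∧ G.Adj u v := by
    intro u v
    rw [hH, SimpleGraph.fromRel_adj]
    constructor
    · rintro ⟨hne, ⟨h1, h2, h3⟩ | ⟨h1, h2, h3⟩⟩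
      · exact ⟨h2, h3, h1⟩
      · exact ⟨h3, h2, h1.symm⟩
    · rintro ⟨h1, h2, h3⟩
      exact ⟨h3.ne, Or.inl ⟨h3, h1, h2⟩⟩
  have hEdge : H.edgeFinset = G.edgeFinset.filter (fun e => ∀ v ∈ e, v ∈ A) := by
    ext e
    refine Sym2.ind (fun x y => ?_) e
    simp only [SimpleGraph.mem_edgeFinset, Finset.mem_filter, SimpleGraph.mem_edgeSet,
      Sym2.mem_iff, hHadj]
    constructor
    · rintro ⟨h1, h2, h3⟩
      exact ⟨h3, by rintro v (rfl | rfl) <;> assumption⟩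
    · rintro ⟨h1, h2⟩
      exact ⟨h2 x (Or.inl rfl), h2 y (Or.inr rfl), h1⟩
  have h2m := SimpleGraph.two_mul_card_edgeFinset (G := H)
  rw [hEdge] at h2m
  have hfilter : ((Finset.univ : Finset (Fin n × Fin n)).filter
      (fun p => p.1 ∈ A ∧ p.2 ∈ A ∧ G.Adj p.1 p.2))
      = (Finset.univ.filter fun (x, y) => H.Adj x y) := by
    ext p
    simp only [Finset.mem_filter, Finset.mem_univ, true_and, hHadj]
  rw [hfilter, ← h2m]

end Garland
open scoped Classical

namespace Garland
variable {n k : ℕ} (G : SimpleGraph (Fin n)) (hk : 2 ≤ k) (hk1 : 1 ≤ k)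
  (φ : {s : Finset (Fin n) // s.card = k} → ℝ)

lemma phiU_mem {u : Fin n} {τ : {s : Finset (Fin n) // s.card = k - 1}} (h : u ∈ τ.1) :
    phiU n k hk1 φ u τ = 0 := by
  rw [phiU, dif_pos h]

lemma phiU_not_mem {u : Fin n} {τ : {s : Finset (Fin n) // s.card = k - 1}} (h : u ∉ τ.1)
    (B : {s : Finset (Fin n) // s.card = k}) (hB : B.1 = insert u τ.1) :
    phiU n k hk1 φ u τ = φ B := by
  rw [phiU, dif_neg h]
  exact congrArg φ (Subtype.ext hB.symm)

lemma cross_piece (u : Fin n) :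
    ∑ p ∈ (Finset.univ : Finset ({s : Finset (Fin n) // s.card = k - 1} ×
        {s : Finset (Fin n) // s.card = k - 1})).filter
        (fun p => u ∉ p.1.1 ∧ u ∈ p.2.1 ∧ Pad G p.1.1 p.2.1),
      (phiU n k hk1 φ u p.1 - phiU n k hk1 φ u p.2)^2
    = ∑ q ∈ (Finset.univ : Finset ({s : Finset (Fin n) // s.card = k} × Fin n)).filter
        (fun q => u ∈ q.1.1 ∧ q.2 ∈ q.1.1 ∧ G.Adj u q.2),
      (φ q.1)^2 := by
  symm
  refine Finset.sum_bij
    (i := fun q hq =>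
      ((⟨q.1.1.erase u, by
          have hq' := (Finset.mem_filter.mp hq).2
          rw [Finset.card_erase_of_mem hq'.1, q.1.2]⟩ :
          {s : Finset (Fin n) // s.card = k - 1}),
        ⟨q.1.1.erase q.2, by
          have hq' := (Finset.mem_filter.mp hq).2
          rw [Finset.card_erase_of_mem hq'.2.1, q.1.2]⟩))
    ?_ ?_ ?_ ?_
  · -- maps into the filter
    intro q hq
    obtain ⟨-, hu, hx, hadj⟩ := Finset.mem_filter.mp hq
    refine Finset.mem_filter.mpr ⟨Finset.mem_univ _, ?_, ?_, ?_⟩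
    · exact Finset.notMem_erase u _
    · exact Finset.mem_erase.mpr ⟨hadj.ne, hu⟩
    · exact ⟨u, q.2, hadj, symmDiff_erase_pair hu hx hadj.ne⟩
  · -- injective
    intro q1 hq1 q2 hq2 heq
    obtain ⟨-, hu1, hx1, hadj1⟩ := Finset.mem_filter.mp hq1
    obtain ⟨-, hu2, hx2, hadj2⟩ := Finset.mem_filter.mp hq2
    have h1 : q1.1.1.erase u = q2.1.1.erase u := congrArg (fun z => z.1.1) heq
    have h2 : q1.1.1.erase q1.2 = q2.1.1.erase q2.2 := congrArg (fun z => z.2.1) heq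
    have hA : q1.1.1 = q2.1.1 := by
      rw [← Finset.insert_erase hu1, ← Finset.insert_erase hu2, h1]
    have hA' : q1.1 = q2.1 := Subtype.ext hA
    have hx : q1.2 = q2.2 := by
      by_contra hne
      rw [hA] at h2
      have : q1.2 ∈ q2.1.1.erase q2.2 := Finset.mem_erase.mpr ⟨hne, hA ▸ hx1⟩
      rw [← h2] at this
      exact Finset.notMem_erase _ _ this
    exact Prod.ext hA' hx
  · -- surjective
    intro p hp
    obtain ⟨-, huτ, huτ', hpad⟩ := Finset.mem_filter.mp hp
    obtain ⟨x, hadj, hxτ, hxτ', hτ'⟩ :=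
      cross_structure G p.1.2 p.2.2 huτ huτ' hpad
    refine ⟨((⟨insert u p.1.1, by
        rw [Finset.card_insert_of_notMem huτ, p.1.2]; omega⟩ :
        {s : Finset (Fin n) // s.card = k}), x), ?_, ?_⟩
    · exact Finset.mem_filter.mpr ⟨Finset.mem_univ _,
        Finset.mem_insert_self u _, Finset.mem_insert_of_mem hxτ, hadj⟩
    · apply Prod.ext
      · exact Subtype.ext (by simp [Finset.erase_insert huτ])
      · exact Subtype.ext hτ'.symm
  · -- values
    intro q hq
    obtain ⟨-, hu, hx, hadj⟩ := Finset.mem_filter.mp hq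
    rw [phiU_not_mem hk1 φ (Finset.notMem_erase u _) q.1 (Finset.insert_erase hu).symm,
      phiU_mem hk1 φ (Finset.mem_erase.mpr ⟨hadj.ne, hu⟩)]
    ring

end Garland
open scoped Classical

namespace Garland
variable {n k : ℕ} (G : SimpleGraph (Fin n)) (hk1 : 1 ≤ k)
  (φ : {s : Finset (Fin n) // s.card = k} → ℝ)

lemma main_piece (u : Fin n) :
    ∑ p ∈ (Finset.univ : Finset ({s : Finset (Fin n) // s.card = k - 1} ×
        {s : Finset (Fin n) // s.card = k - 1})).filter
        (fun p => u ∉ p.1.1 ∧ u ∉ p.2.1 ∧ Pad G p.1.1 p.2.1),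
      (phiU n k hk1 φ u p.1 - phiU n k hk1 φ u p.2)^2
    = ∑ P ∈ (Finset.univ : Finset ({s : Finset (Fin n) // s.card = k} ×
        {s : Finset (Fin n) // s.card = k})).filter
        (fun P => u ∈ P.1.1 ∧ u ∈ P.2.1 ∧ Pad G P.1.1 P.2.1),
      (φ P.1 - φ P.2)^2 := by
  symm
  refine Finset.sum_bij
    (i := fun P hP =>
      ((⟨P.1.1.erase u, by
          have hP' := (Finset.mem_filter.mp hP).2
          rw [Finset.card_erase_of_mem hP'.1, P.1.2]⟩ :
          {s : Finset (Fin n) // s.card = k - 1}),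
        ⟨P.2.1.erase u, by
          have hP' := (Finset.mem_filter.mp hP).2
          rw [Finset.card_erase_of_mem hP'.2.1, P.2.2]⟩))
    ?_ ?_ ?_ ?_
  · intro P hP
    obtain ⟨-, h1, h2, hpad⟩ := Finset.mem_filter.mp hP
    refine Finset.mem_filter.mpr ⟨Finset.mem_univ _, Finset.notMem_erase u _,
      Finset.notMem_erase u _, ?_⟩
    obtain ⟨x, y, hxy, hd⟩ := hpad
    exact ⟨x, y, hxy, by rw [symmDiff_erase_erase h1 h2, hd]⟩
  · intro P1 hP1 P2 hP2 heq
    obtain ⟨-, h11, h12, -⟩ := Finset.mem_filter.mp hP1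
    obtain ⟨-, h21, h22, -⟩ := Finset.mem_filter.mp hP2
    have e1 : P1.1.1.erase u = P2.1.1.erase u := congrArg (fun z => z.1.1) heq
    have e2 : P1.2.1.erase u = P2.2.1.erase u := congrArg (fun z => z.2.1) heq
    refine Prod.ext (Subtype.ext ?_) (Subtype.ext ?_)
    · rw [← Finset.insert_erase h11, ← Finset.insert_erase h21, e1]
    · rw [← Finset.insert_erase h12, ← Finset.insert_erase h22, e2]
  · intro p hp
    obtain ⟨-, h1, h2, hpad⟩ := Finset.mem_filter.mp hp
    refine ⟨((⟨insert u p.1.1, by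
        rw [Finset.card_insert_of_notMem h1, p.1.2]; omega⟩ :
        {s : Finset (Fin n) // s.card = k}),
      ⟨insert u p.2.1, by
        rw [Finset.card_insert_of_notMem h2, p.2.2]; omega⟩), ?_, ?_⟩
    · refine Finset.mem_filter.mpr ⟨Finset.mem_univ _, Finset.mem_insert_self u _,
        Finset.mem_insert_self u _, ?_⟩
      obtain ⟨x, y, hxy, hd⟩ := hpad
      exact ⟨x, y, hxy, by rw [symmDiff_insert_insert h1 h2, hd]⟩
    · exact Prod.ext (Subtype.ext (by simp [Finset.erase_insert h1]))
        (Subtype.ext (by simp [Finset.erase_insert h2]))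
  · intro P hP
    obtain ⟨-, h1, h2, -⟩ := Finset.mem_filter.mp hP
    rw [phiU_not_mem hk1 φ (Finset.notMem_erase u _) P.1 (Finset.insert_erase h1).symm,
      phiU_not_mem hk1 φ (Finset.notMem_erase u _) P.2 (Finset.insert_erase h2).symm]

lemma swap_piece (u : Fin n) :
    ∑ p ∈ (Finset.univ : Finset ({s : Finset (Fin n) // s.card = k - 1} ×
        {s : Finset (Fin n) // s.card = k - 1})).filter
        (fun p => u ∈ p.1.1 ∧ u ∉ p.2.1 ∧ Pad G p.1.1 p.2.1),
      (phiU n k hk1 φ u p.1 - phiU n k hk1 φ u p.2)^2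
    = ∑ p ∈ (Finset.univ : Finset ({s : Finset (Fin n) // s.card = k - 1} ×
        {s : Finset (Fin n) // s.card = k - 1})).filter
        (fun p => u ∉ p.1.1 ∧ u ∈ p.2.1 ∧ Pad G p.1.1 p.2.1),
      (phiU n k hk1 φ u p.1 - phiU n k hk1 φ u p.2)^2 := by
  refine Finset.sum_bij (i := fun p _ => Prod.swap p) ?_ ?_ ?_ ?_
  · intro p hp
    obtain ⟨-, h1, h2, hpad⟩ := Finset.mem_filter.mp hp
    exact Finset.mem_filter.mpr ⟨Finset.mem_univ _, h2, h1, pad_symm G hpad⟩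
  · intro p1 _ p2 _ heq
    exact Prod.swap_injective heq
  · intro p hp
    obtain ⟨-, h1, h2, hpad⟩ := Finset.mem_filter.mp hp
    exact ⟨Prod.swap p, Finset.mem_filter.mpr ⟨Finset.mem_univ _, h2, h1, pad_symm G hpad⟩,
      Prod.swap_swap p⟩
  · intro p _
    simp only [Prod.fst_swap, Prod.snd_swap]
    ring

lemma zero_piece (u : Fin n) :
    ∑ p ∈ (Finset.univ : Finset ({s : Finset (Fin n) // s.card = k - 1} ×
        {s : Finset (Fin n) // s.card = k - 1})).filter
        (fun p => u ∈ p.1.1 ∧ u ∈ p.2.1 ∧ Pad G p.1.1 p.2.1),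
      (phiU n k hk1 φ u p.1 - phiU n k hk1 φ u p.2)^2 = 0 := by
  refine Finset.sum_eq_zero fun p hp => ?_
  obtain ⟨-, h1, h2, -⟩ := Finset.mem_filter.mp hp
  rw [phiU_mem hk1 φ h1, phiU_mem hk1 φ h2]
  ring

end Garland
open scoped Classical

namespace Garland
variable {n k : ℕ} (G : SimpleGraph (Fin n)) (hk1 : 1 ≤ k)
  (φ : {s : Finset (Fin n) // s.card = k} → ℝ)

lemma double_to_pairs {α : Type*} [Fintype α] (P : α × α → Prop) (f : α × α → ℝ) :
    ∑ a : α, ∑ b : α, (if P (a, b) then f (a, b) else 0)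
      = ∑ p ∈ (Finset.univ : Finset (α × α)).filter P, f p := by
  rw [Finset.sum_filter]
  exact (Fintype.sum_prod_type (f := fun p : α × α => if P p then f p else 0)).symm

lemma Su_eq (u : Fin n) :
    (∑ τ : {s : Finset (Fin n) // s.card = k - 1},
      ∑ τ' : {s : Finset (Fin n) // s.card = k - 1},
        if (tokenGraph n (k - 1) G).Adj τ τ' then
          (phiU n k hk1 φ u τ - phiU n k hk1 φ u τ')^2 else 0)
    = (∑ P ∈ (Finset.univ : Finset ({s : Finset (Fin n) // s.card = k} ×
          {s : Finset (Fin n) // s.card = k})).filter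
          (fun P => u ∈ P.1.1 ∧ u ∈ P.2.1 ∧ Pad G P.1.1 P.2.1),
        (φ P.1 - φ P.2)^2)
      + 2 * ∑ q ∈ (Finset.univ : Finset ({s : Finset (Fin n) // s.card = k} × Fin n)).filter
          (fun q => u ∈ q.1.1 ∧ q.2 ∈ q.1.1 ∧ G.Adj u q.2),
        (φ q.1)^2 := by
  have h0 : (∑ τ : {s : Finset (Fin n) // s.card = k - 1},
      ∑ τ' : {s : Finset (Fin n) // s.card = k - 1},
        if (tokenGraph n (k - 1) G).Adj τ τ' then
          (phiU n k hk1 φ u τ - phiU n k hk1 φ u τ')^2 else 0)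
      = ∑ p ∈ (Finset.univ : Finset ({s : Finset (Fin n) // s.card = k - 1} ×
          {s : Finset (Fin n) // s.card = k - 1})).filter (fun p => Pad G p.1.1 p.2.1),
        (phiU n k hk1 φ u p.1 - phiU n k hk1 φ u p.2)^2 := by
    refine Eq.trans ?_ (double_to_pairs (fun p => Pad G p.1.1 p.2.1)
      (fun p => (phiU n k hk1 φ u p.1 - phiU n k hk1 φ u p.2)^2))
    refine Finset.sum_congr rfl fun τ _ => Finset.sum_congr rfl fun τ' _ => ?_
    simp only [adj_iff G]
  rw [h0]
  set S := (Finset.univ : Finset ({s : Finset (Fin n) // s.card = k - 1} ×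
      {s : Finset (Fin n) // s.card = k - 1})).filter (fun p => Pad G p.1.1 p.2.1) with hS
  set g : {s : Finset (Fin n) // s.card = k - 1} × {s : Finset (Fin n) // s.card = k - 1} → ℝ :=
    fun p => (phiU n k hk1 φ u p.1 - phiU n k hk1 φ u p.2)^2 with hg
  have hsplit1 := Finset.sum_filter_add_sum_filter_not S (fun p => u ∈ p.1.1) g
  have hsplit2 := Finset.sum_filter_add_sum_filter_not (S.filter (fun p => u ∈ p.1.1))
    (fun p => u ∈ p.2.1) g
  have hsplit3 := Finset.sum_filter_add_sum_filter_not (S.filter (fun p => ¬ u ∈ p.1.1))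
    (fun p => u ∈ p.2.1) g
  have eA : (S.filter (fun p => u ∈ p.1.1)).filter (fun p => u ∈ p.2.1)
      = Finset.univ.filter (fun p => u ∈ p.1.1 ∧ u ∈ p.2.1 ∧ Pad G p.1.1 p.2.1) := by
    rw [hS, Finset.filter_filter, Finset.filter_filter]
    ext p; simp only [Finset.mem_filter, Finset.mem_univ, true_and]; tauto
  have eB : (S.filter (fun p => u ∈ p.1.1)).filter (fun p => ¬ u ∈ p.2.1)
      = Finset.univ.filter (fun p => u ∈ p.1.1 ∧ u ∉ p.2.1 ∧ Pad G p.1.1 p.2.1) := by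
    rw [hS, Finset.filter_filter, Finset.filter_filter]
    ext p; simp only [Finset.mem_filter, Finset.mem_univ, true_and]; tauto
  have eC : (S.filter (fun p => ¬ u ∈ p.1.1)).filter (fun p => u ∈ p.2.1)
      = Finset.univ.filter (fun p => u ∉ p.1.1 ∧ u ∈ p.2.1 ∧ Pad G p.1.1 p.2.1) := by
    rw [hS, Finset.filter_filter, Finset.filter_filter]
    ext p; simp only [Finset.mem_filter, Finset.mem_univ, true_and]; tauto
  have eD : (S.filter (fun p => ¬ u ∈ p.1.1)).filter (fun p => ¬ u ∈ p.2.1)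
      = Finset.univ.filter (fun p => u ∉ p.1.1 ∧ u ∉ p.2.1 ∧ Pad G p.1.1 p.2.1) := by
    rw [hS, Finset.filter_filter, Finset.filter_filter]
    ext p; simp only [Finset.mem_filter, Finset.mem_univ, true_and]; tauto
  rw [eA] at hsplit2
  rw [eB] at hsplit2
  rw [eC] at hsplit3
  rw [eD] at hsplit3
  have hz := zero_piece hk1 φ (G := G) u
  have hsw := swap_piece G hk1 φ u
  have hcr := cross_piece G hk1 φ u
  have hmn := main_piece G hk1 φ u
  simp only [hg] at hsplit1 hsplit2 hsplit3
  linarith [hsplit1, hsplit2, hsplit3, hz, hsw, hcr, hmn]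

end Garland
open scoped Classical

namespace Garland
variable {n k : ℕ} (G : SimpleGraph (Fin n)) (hk : 2 ≤ k)
  (φ : {s : Finset (Fin n) // s.card = k} → ℝ)

lemma indicator_sum {S : Finset (Fin n)} (c : ℝ) :
    ∑ u : Fin n, (if u ∈ S then c else 0) = (S.card : ℝ) * c := by
  rw [Finset.sum_ite_mem, Finset.univ_inter, Finset.sum_const, nsmul_eq_mul]

lemma sum_main (hk : 2 ≤ k) :
    ∑ u : Fin n, ∑ P ∈ (Finset.univ : Finset ({s : Finset (Fin n) // s.card = k} ×
        {s : Finset (Fin n) // s.card = k})).filter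
        (fun P => u ∈ P.1.1 ∧ u ∈ P.2.1 ∧ Pad G P.1.1 P.2.1),
      (φ P.1 - φ P.2)^2
    = ((k : ℝ) - 1) * ∑ P ∈ (Finset.univ : Finset ({s : Finset (Fin n) // s.card = k} ×
        {s : Finset (Fin n) // s.card = k})).filter (fun P => Pad G P.1.1 P.2.1),
      (φ P.1 - φ P.2)^2 := by
  have hstep : ∀ u : Fin n,
      (∑ P ∈ (Finset.univ : Finset ({s : Finset (Fin n) // s.card = k} ×
        {s : Finset (Fin n) // s.card = k})).filter
        (fun P => u ∈ P.1.1 ∧ u ∈ P.2.1 ∧ Pad G P.1.1 P.2.1), (φ P.1 - φ P.2)^2)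
      = ∑ P ∈ (Finset.univ : Finset ({s : Finset (Fin n) // s.card = k} ×
        {s : Finset (Fin n) // s.card = k})).filter (fun P => Pad G P.1.1 P.2.1),
        (if u ∈ P.1.1 ∩ P.2.1 then (φ P.1 - φ P.2)^2 else 0) := by
    intro u
    rw [← Finset.sum_filter, Finset.filter_filter]
    apply Finset.sum_congr
    · ext P; simp only [Finset.mem_filter, Finset.mem_univ, true_and, Finset.mem_inter]; tauto
    · intros; rfl
  simp only [hstep]
  rw [Finset.sum_comm, Finset.mul_sum]
  apply Finset.sum_congr rfl
  intro P hP
  rw [indicator_sum]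
  obtain ⟨-, hpad⟩ := Finset.mem_filter.mp hP
  have hc := (pad_facts G P.1.2 P.2.2 hpad).1
  rw [hc]
  congr 1
  rw [Nat.cast_sub (by omega : 1 ≤ k)]
  push_cast
  ring

end Garland
open scoped Classical

namespace Garland
variable {n k : ℕ} (G : SimpleGraph (Fin n))
  (φ : {s : Finset (Fin n) // s.card = k} → ℝ)

lemma sum_cross :
    ∑ u : Fin n, ∑ q ∈ (Finset.univ : Finset ({s : Finset (Fin n) // s.card = k} × Fin n)).filter
        (fun q => u ∈ q.1.1 ∧ q.2 ∈ q.1.1 ∧ G.Adj u q.2), (φ q.1)^2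
    = 2 * ∑ A : {s : Finset (Fin n) // s.card = k},
        ((G.edgeFinset.filter (fun e => ∀ v ∈ e, v ∈ A.1)).card : ℝ) * (φ A)^2 := by
  have hstep : ∀ u : Fin n,
      (∑ q ∈ (Finset.univ : Finset ({s : Finset (Fin n) // s.card = k} × Fin n)).filter
        (fun q => u ∈ q.1.1 ∧ q.2 ∈ q.1.1 ∧ G.Adj u q.2), (φ q.1)^2)
      = ∑ A : {s : Finset (Fin n) // s.card = k}, ∑ x : Fin n,
          (if u ∈ A.1 ∧ x ∈ A.1 ∧ G.Adj u x then (φ A)^2 else 0) := by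
    intro u
    rw [Finset.sum_filter]
    exact Fintype.sum_prod_type (f := fun q : {s : Finset (Fin n) // s.card = k} × Fin n =>
      if u ∈ q.1.1 ∧ q.2 ∈ q.1.1 ∧ G.Adj u q.2 then (φ q.1)^2 else 0)
  simp only [hstep]
  rw [Finset.sum_comm, Finset.mul_sum]
  apply Finset.sum_congr rfl
  intro A _
  have hpair : (∑ u : Fin n, ∑ x : Fin n,
      (if u ∈ A.1 ∧ x ∈ A.1 ∧ G.Adj u x then (φ A)^2 else 0))
      = ∑ p ∈ (Finset.univ : Finset (Fin n × Fin n)).filter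
          (fun p => p.1 ∈ A.1 ∧ p.2 ∈ A.1 ∧ G.Adj p.1 p.2), (φ A)^2 := by
    rw [Finset.sum_filter]
    exact (Fintype.sum_prod_type (f := fun p : Fin n × Fin n =>
      if p.1 ∈ A.1 ∧ p.2 ∈ A.1 ∧ G.Adj p.1 p.2 then (φ A)^2 else 0)).symm
  rw [hpair, Finset.sum_const, nsmul_eq_mul, edge_count G A.1]
  push_cast
  ring

lemma dq_eq : Dmat n k G *ᵥ φ ⬝ᵥ φ
    = ∑ A : {s : Finset (Fin n) // s.card = k},
        ((G.edgeFinset.filter (fun e => ∀ v ∈ e, v ∈ A.1)).card : ℝ) * (φ A)^2 := by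
  simp only [Dmat, dotProduct, mulVec_diagonal]
  exact Finset.sum_congr rfl fun A _ => by ring

end Garland

open Garland
open scoped Classical

/-- `(k-1)⟨L_k φ, φ⟩ = ∑_u ⟨L_{k-1} φ_u, φ_u⟩ - 2⟨D_k φ, φ⟩`. -/
theorem garland_identity (n k : ℕ) (G : SimpleGraph (Fin n)) (hk : 2 ≤ k) (hkn : k ≤ n)
    (φ : {s : Finset (Fin n) // s.card = k} → ℝ) :
    ((k : ℝ) - 1) * (lapTok n k G *ᵥ φ ⬝ᵥ φ) =
      (∑ u : Fin n, (lapTok n (k - 1) G *ᵥ phiU n k (by omega) φ u ⬝ᵥ phiU n k (by omega) φ u)) -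
        2 * (Dmat n k G *ᵥ φ ⬝ᵥ φ) := by
  have hk1 : 1 ≤ k := by omega
  have hquadK : lapTok n k G *ᵥ φ ⬝ᵥ φ
      = (∑ P ∈ (Finset.univ : Finset ({s : Finset (Fin n) // s.card = k} ×
          {s : Finset (Fin n) // s.card = k})).filter (fun P => Pad G P.1.1 P.2.1),
        (φ P.1 - φ P.2)^2) / 2 := by
    rw [lapTok, quad_form]
    congr 1
    refine Eq.trans ?_ (double_to_pairs (fun p => Pad G p.1.1 p.2.1)
      (fun p => (φ p.1 - φ p.2)^2))
    refine Finset.sum_congr rfl fun A _ => Finset.sum_congr rfl fun B _ => ?_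
    simp only [adj_iff G]
  have hquadU : ∀ u : Fin n,
      lapTok n (k - 1) G *ᵥ phiU n k hk1 φ u ⬝ᵥ phiU n k hk1 φ u
      = ((∑ P ∈ (Finset.univ : Finset ({s : Finset (Fin n) // s.card = k} ×
            {s : Finset (Fin n) // s.card = k})).filter
            (fun P => u ∈ P.1.1 ∧ u ∈ P.2.1 ∧ Pad G P.1.1 P.2.1),
          (φ P.1 - φ P.2)^2)
        + 2 * ∑ q ∈ (Finset.univ : Finset ({s : Finset (Fin n) // s.card = k} × Fin n)).filter
            (fun q => u ∈ q.1.1 ∧ q.2 ∈ q.1.1 ∧ G.Adj u q.2),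
          (φ q.1)^2) / 2 := by
    intro u
    rw [lapTok, quad_form]
    congr 1
    exact Su_eq G hk1 φ u
  rw [hquadK, dq_eq]
  simp only [hquadU]
  rw [← Finset.sum_div, Finset.sum_add_distrib, ← Finset.mul_sum,
    sum_main G φ hk, sum_cross G φ]
  ring
end

section
/- Let G be a graph on [n] and 1 ≤ k ≤ n. Then B_{n,k,k−1} · L_{k−1}(G) = L_k(G) · B_{n,k,k−1}, where B_{n,k,k−1} is the inclusion matrix with rows indexed by k-subsets and columns by (k−1)-subsets of [n], having entry 1 if the (k−1)-subset is contained in the k-subset and 0 otherwise, and L_j(G) is the Laplacian of the j-th token graph F_j(G). -/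
open Finset

/-- The inclusion matrix `B_{n,k,l}` of `l`-subsets into `k`-subsets of `[n]`. -/
def inclMatrix (n k l : ℕ) :
    Matrix {s : Finset (Fin n) // s.card = k} {s : Finset (Fin n) // s.card = l} ℝ :=
  fun σ η => if η.1 ⊆ σ.1 then 1 else 0

namespace TokenAux

attribute [local instance] Classical.propDecidable

variable {n : ℕ} {G : SimpleGraph (Fin n)}

/-- The swap relation on finsets. -/
def R (G : SimpleGraph (Fin n)) (s t : Finset (Fin n)) : Prop :=
  ∃ u v, G.Adj u v ∧ symmDiff s t = {u, v}

lemma R_comm {s t : Finset (Fin n)} : R G s t ↔ R G t s := by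
  constructor <;> rintro ⟨u, v, huv, h⟩ <;> exact ⟨u, v, huv, by rwa [symmDiff_comm]⟩

/-- Structure extraction. -/
lemma struct {s t : Finset (Fin n)} (hcard : s.card = t.card) (h : R G s t) :
    ∃ x y, G.Adj x y ∧ s \ t = {x} ∧ t \ s = {y} := by
  obtain ⟨u, v, huv, hst⟩ := h
  have hne : u ≠ v := huv.ne
  have hsub1 : s \ t ⊆ {u, v} := by
    intro z hz; rw [← hst, Finset.mem_symmDiff]; simp at hz; tauto
  have hsub2 : t \ s ⊆ {u, v} := by
    intro z hz; rw [← hst, Finset.mem_symmDiff]; simp at hz; tauto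
  have hne1 : (s \ t).Nonempty := by
    rw [Finset.sdiff_nonempty]
    intro hsub
    have : s = t := Finset.eq_of_subset_of_card_le hsub (le_of_eq hcard.symm)
    rw [this, symmDiff_self] at hst
    have : u ∈ ({u, v} : Finset (Fin n)) := by simp
    rw [← hst] at this; simp at this
  have hne2 : (t \ s).Nonempty := by
    rw [Finset.sdiff_nonempty]
    intro hsub
    have : t = s := Finset.eq_of_subset_of_card_le hsub (le_of_eq hcard)
    rw [this, symmDiff_self] at hst
    have : u ∈ ({u, v} : Finset (Fin n)) := by simp
    rw [← hst] at this; simp at this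
  obtain ⟨x, hx⟩ := hne1
  obtain ⟨y, hy⟩ := hne2
  have hxs : x ∈ s ∧ x ∉ t := by simpa using hx
  have hys : y ∈ t ∧ y ∉ s := by simpa using hy
  have hxy : x ≠ y := fun h => hxs.2 (h ▸ hys.1)
  have hadj : G.Adj x y := by
    have hxm := hsub1 hx
    have hym := hsub2 hy
    simp at hxm hym
    rcases hxm with rfl | rfl <;> rcases hym with rfl | rfl
    · exact absurd rfl hxy
    · exact huv
    · exact huv.symm
    · exact absurd rfl hxy
  refine ⟨x, y, hadj, ?_, ?_⟩
  · ext z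
    simp only [Finset.mem_sdiff, Finset.mem_singleton]
    constructor
    · intro hz
      have := hsub1 (Finset.mem_sdiff.mpr hz)
      simp at this
      have hxm := hsub1 hx
      have hym := hsub2 hy
      simp at hxm hym
      rcases this with rfl | rfl <;> rcases hxm with rfl | rfl <;> rcases hym with rfl | rfl <;>
        first | rfl | (exact absurd hz.1 hys.2) | (exact absurd rfl hxy) | (exact absurd rfl hne)
    · rintro rfl; exact hxs
  · ext z
    simp only [Finset.mem_sdiff, Finset.mem_singleton]
    constructor
    · intro hz
      have := hsub2 (Finset.mem_sdiff.mpr hz)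
      simp at this
      have hxm := hsub1 hx
      have hym := hsub2 hy
      simp at hxm hym
      rcases this with rfl | rfl <;> rcases hxm with rfl | rfl <;> rcases hym with rfl | rfl <;>
        first | rfl | (exact absurd hz.1 hxs.2) | (exact absurd rfl hxy) | (exact absurd rfl hne) | (exact absurd rfl hxy.symm)
    · rintro rfl; exact hys

lemma R_of_sdiff {s t : Finset (Fin n)} {x y : Fin n} (hadj : G.Adj x y)
    (h1 : s \ t = {x}) (h2 : t \ s = {y}) : R G s t := by
  refine ⟨x, y, hadj, ?_⟩
  rw [symmDiff_def]
  show s \ t ∪ t \ s = _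
  rw [h1, h2]; rfl

lemma adj_iff {j : ℕ} (A B : {s : Finset (Fin n) // s.card = j}) :
    (tokenGraph n j G).Adj A B ↔ R G A.1 B.1 := by
  rw [tokenGraph, SimpleGraph.fromRel_adj]
  constructor
  · rintro ⟨hne, ⟨-, u, v, huv, h⟩ | ⟨-, u, v, huv, h⟩⟩
    · exact ⟨u, v, huv, h⟩
    · exact ⟨u, v, huv, by rwa [symmDiff_comm]⟩
  · intro h
    obtain ⟨x, y, hadj, h1, h2⟩ := struct (by rw [A.2, B.2]) h
    have hAB : A ≠ B := by
      intro he
      rw [he] at h1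
      simp at h1
    refine ⟨hAB, Or.inl ⟨?_, h⟩⟩
    have hcard : A.1.card = (A.1 ∩ B.1).card + (A.1 \ B.1).card := by
      rw [Finset.card_inter_add_card_sdiff]
    rw [h1, Finset.card_singleton, A.2] at hcard
    omega


lemma mem_of_sdiff_singleton {s t : Finset (Fin n)} {x : Fin n} (h : s \ t = {x}) :
    x ∈ s ∧ x ∉ t := by
  have : x ∈ s \ t := by rw [h]; exact mem_singleton_self x
  simpa using this

lemma eq_of_sdiff_singleton {s t : Finset (Fin n)} {x z : Fin n} (h : s \ t = {x})
    (hzs : z ∈ s) (hzt : z ∉ t) : z = x := by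
  have : z ∈ s \ t := mem_sdiff.mpr ⟨hzs, hzt⟩
  rw [h] at this; simpa using this

lemma symmDiff_pair {s t : Finset (Fin n)} {x y : Fin n} (h1 : s \ t = {x}) (h2 : t \ s = {y}) :
    symmDiff s t = ({x, y} : Finset (Fin n)) := by
  rw [symmDiff_def]
  show s \ t ∪ t \ s = _
  rw [h1, h2]
  rfl

lemma case2 {k : ℕ} {A S : Finset (Fin n)} (hA : A.card = k) (hS : S.card = k - 1)
    (hSA : ¬ S ⊆ A)
    [DecidablePred fun t : Finset (Fin n) => t.card = k - 1 ∧ (t ⊆ A ∧ R G t S)]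
    [DecidablePred fun c : Finset (Fin n) => c.card = k ∧ (S ⊆ c ∧ R G A c)] :
    (univ.filter fun t : Finset (Fin n) => t.card = k - 1 ∧ (t ⊆ A ∧ R G t S)).card
      = (univ.filter fun c : Finset (Fin n) => c.card = k ∧ (S ⊆ c ∧ R G A c)).card := by
  classical
  apply Finset.card_nbij' (fun t => symmDiff A (symmDiff t S))
    (fun c => symmDiff S (symmDiff A c))
  · intro t ht
    simp only [Finset.mem_coe, mem_filter, mem_univ, true_and] at ht ⊢
    obtain ⟨htc, htA, hR⟩ := ht
    obtain ⟨x, y, hxy, h1, h2⟩ := struct (by rw [htc, hS]) hR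
    obtain ⟨hxt, hxS⟩ := mem_of_sdiff_singleton h1
    obtain ⟨hyS, hyt⟩ := mem_of_sdiff_singleton h2
    have hxA : x ∈ A := htA hxt
    have hyA : y ∉ A := by
      intro hyA
      apply hSA
      intro z hz
      by_cases hzt : z ∈ t
      · exact htA hzt
      · have := eq_of_sdiff_singleton h2 hz hzt
        rwa [this]
    have hts : symmDiff t S = ({x, y} : Finset (Fin n)) := symmDiff_pair h1 h2
    have hxy' : x ≠ y := fun h => hyA (h ▸ hxA)
    have hc : symmDiff A (symmDiff t S) = insert y (A.erase x) := by
      rw [hts]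
      ext z
      simp only [Finset.mem_symmDiff, mem_insert, mem_erase, mem_singleton]
      rcases eq_or_ne z x with rfl | hzx <;> rcases eq_or_ne z y with rfl | hzy <;>
        simp_all <;> tauto
    rw [hc]
    have hyA' : y ∉ A.erase x := fun h => hyA (mem_of_mem_erase h)
    refine ⟨?_, ?_, ?_⟩
    · rw [Finset.card_insert_of_notMem hyA', Finset.card_erase_of_mem hxA, hA]
      have : 1 ≤ k := by
        have : A.Nonempty := ⟨x, hxA⟩
        have := Finset.card_pos.mpr this
        omega
      omega
    · intro z hz
      rcases eq_or_ne z y with rfl | hzy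
      · exact mem_insert_self _ _
      · have hzt : z ∈ t := by
          by_contra hzt
          exact hzy (eq_of_sdiff_singleton h2 hz hzt)
        have hzx : z ≠ x := fun h => hxS (h ▸ hz)
        exact mem_insert_of_mem (Finset.mem_erase.mpr ⟨hzx, htA hzt⟩)
    · refine ⟨x, y, hxy, ?_⟩
      rw [← hc, symmDiff_symmDiff_cancel_left, hts]
  · intro c hc
    simp only [Finset.mem_coe, mem_filter, mem_univ, true_and] at hc ⊢
    obtain ⟨hcc, hSc, hR⟩ := hc
    obtain ⟨x, y, hxy, h1, h2⟩ := struct (by rw [hA, hcc]) hR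
    obtain ⟨hxA, hxc⟩ := mem_of_sdiff_singleton h1
    obtain ⟨hyc, hyA⟩ := mem_of_sdiff_singleton h2
    have hxS : x ∉ S := fun h => hxc (hSc h)
    have hyS : y ∈ S := by
      obtain ⟨z, hzS, hzA⟩ : ∃ z, z ∈ S ∧ z ∉ A := by
        by_contra h
        push_neg at h
        exact hSA h
      have hzc : z ∈ c := hSc hzS
      have := eq_of_sdiff_singleton h2 hzc hzA
      rwa [← this]
    have hxy' : x ≠ y := fun h => hyA (h ▸ hxA)
    have hAc : symmDiff A c = ({x, y} : Finset (Fin n)) := symmDiff_pair h1 h2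
    have ht : symmDiff S (symmDiff A c) = insert x (S.erase y) := by
      rw [hAc]
      ext z
      simp only [Finset.mem_symmDiff, mem_insert, mem_erase, mem_singleton]
      rcases eq_or_ne z x with rfl | hzx <;> rcases eq_or_ne z y with rfl | hzy <;>
        simp_all <;> tauto
    rw [ht]
    have hxS' : x ∉ S.erase y := fun h => hxS (mem_of_mem_erase h)
    have hS1 : 1 ≤ S.card := Finset.card_pos.mpr ⟨y, hyS⟩
    refine ⟨?_, ?_, ?_⟩
    · rw [Finset.card_insert_of_notMem hxS', Finset.card_erase_of_mem hyS, hS]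
      omega
    · intro z hz
      rcases mem_insert.mp hz with rfl | hz'
      · exact hxA
      · have hzS : z ∈ S := mem_of_mem_erase hz'
        have hzy : z ≠ y := (Finset.mem_erase.mp hz').1
        by_contra hzA
        have : z ∈ c \ A := mem_sdiff.mpr ⟨hSc hzS, hzA⟩
        rw [h2] at this
        exact hzy (by simpa using this)
    · refine ⟨x, y, hxy, ?_⟩
      rw [← ht]
      have : symmDiff (symmDiff S (symmDiff A c)) S = symmDiff A c := by
        rw [symmDiff_comm S (symmDiff A c), symmDiff_symmDiff_cancel_right]
      rw [this, hAc]
  · intro t _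
    dsimp only
    rw [symmDiff_symmDiff_cancel_left, symmDiff_comm t S, symmDiff_symmDiff_cancel_left]
  · intro c _
    dsimp only
    rw [symmDiff_comm S (symmDiff A c), symmDiff_symmDiff_cancel_right,
      symmDiff_symmDiff_cancel_left]


lemma case1 {k : ℕ} {A S : Finset (Fin n)} (hA : A.card = k) (hS : S.card = k - 1)
    (hk : 1 ≤ k) (hSA : S ⊆ A)
    [DecidablePred fun t : Finset (Fin n) => t.card = k - 1 ∧ (R G t S ∧ ¬ t ⊆ A)]
    [DecidablePred fun c : Finset (Fin n) => c.card = k ∧ (R G A c ∧ ¬ S ⊆ c)] :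
    (univ.filter fun t : Finset (Fin n) => t.card = k - 1 ∧ (R G t S ∧ ¬ t ⊆ A)).card
      = (univ.filter fun c : Finset (Fin n) => c.card = k ∧ (R G A c ∧ ¬ S ⊆ c)).card := by
  classical
  have hAScard : (A \ S).card = 1 := by
    rw [Finset.card_sdiff_of_subset hSA, hA, hS]; omega
  obtain ⟨a0, ha0⟩ := Finset.card_eq_one.mp hAScard
  obtain ⟨ha0A, ha0S⟩ := mem_of_sdiff_singleton ha0
  have hAchar : ∀ z, z ∈ A → z ≠ a0 → z ∈ S := by
    intro z hz hza
    by_contra hzS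
    exact hza (eq_of_sdiff_singleton ha0 hz hzS)
  apply Finset.card_nbij' (fun t => symmDiff t {a0}) (fun c => symmDiff c {a0})
  · intro t ht
    simp only [Finset.mem_coe, mem_filter, mem_univ, true_and] at ht ⊢
    obtain ⟨htc, hR, htA⟩ := ht
    obtain ⟨x, y, hxy, h1, h2⟩ := struct (by rw [htc, hS]) hR
    obtain ⟨hxt, hxS⟩ := mem_of_sdiff_singleton h1
    obtain ⟨hyS, hyt⟩ := mem_of_sdiff_singleton h2
    have hxA : x ∉ A := by
      intro hxA
      apply htA
      intro z hz
      by_cases hzS : z ∈ S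
      · exact hSA hzS
      · have := eq_of_sdiff_singleton h1 hz hzS
        rwa [this]
    have ha0t : a0 ∉ t := by
      intro h
      exact hxA (eq_of_sdiff_singleton h1 h ha0S ▸ ha0A)
    have hxa0 : x ≠ a0 := fun h => hxA (h ▸ ha0A)
    have hya0 : y ≠ a0 := fun h => ha0S (h ▸ hyS)
    have hins : symmDiff t ({a0} : Finset (Fin n)) = insert a0 t := by
      ext z
      simp only [Finset.mem_symmDiff, mem_singleton, mem_insert]
      rcases eq_or_ne z a0 with rfl | hz <;> simp_all
    rw [hins]
    refine ⟨?_, ?_, ?_⟩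
    · rw [Finset.card_insert_of_notMem ha0t, htc]; omega
    · refine ⟨x, y, hxy, ?_⟩
      ext z
      simp only [Finset.mem_symmDiff, mem_insert, mem_singleton]
      constructor
      · rintro (⟨hzA, hz⟩ | ⟨(rfl | hzt), hzA⟩)
        · push_neg at hz
          obtain ⟨hza0, hzt⟩ := hz
          have hzS : z ∈ S := hAchar z hzA hza0
          have : z = y := eq_of_sdiff_singleton h2 hzS hzt
          simp [this]
        · exact absurd ha0A hzA
        · by_cases hzS : z ∈ S
          · exact absurd (hSA hzS) hzA
          · have : z = x := eq_of_sdiff_singleton h1 hzt hzS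
            simp [this]
      · rintro (rfl | rfl)
        · exact Or.inr ⟨Or.inr hxt, hxA⟩
        · exact Or.inl ⟨hSA hyS, by push_neg; exact ⟨hya0, hyt⟩⟩
    · intro hSc
      rcases mem_insert.mp (hSc hyS) with h | h
      · exact hya0 h
      · exact hyt h
  · intro c hc
    simp only [Finset.mem_coe, mem_filter, mem_univ, true_and] at hc ⊢
    obtain ⟨hcc, hR, hSc⟩ := hc
    obtain ⟨x, y, hxy, h1, h2⟩ := struct (by rw [hA, hcc]) hR
    obtain ⟨hxA, hxc⟩ := mem_of_sdiff_singleton h1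
    obtain ⟨hyc, hyA⟩ := mem_of_sdiff_singleton h2
    have hxS : x ∈ S := by
      obtain ⟨z, hzS, hzc⟩ : ∃ z, z ∈ S ∧ z ∉ c := by
        by_contra h
        push_neg at h
        exact hSc h
      have := eq_of_sdiff_singleton h1 (hSA hzS) hzc
      rwa [← this]
    have hxa0 : x ≠ a0 := fun h => ha0S (h ▸ hxS)
    have hya0 : y ≠ a0 := fun h => hyA (h ▸ ha0A)
    have ha0c : a0 ∈ c := by
      by_contra h
      exact hxa0 ((eq_of_sdiff_singleton h1 ha0A h).symm ▸ rfl)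
    have hers : symmDiff c ({a0} : Finset (Fin n)) = c.erase a0 := by
      ext z
      simp only [Finset.mem_symmDiff, mem_singleton, mem_erase]
      rcases eq_or_ne z a0 with rfl | hz <;> simp_all
    rw [hers]
    refine ⟨?_, ?_, ?_⟩
    · rw [Finset.card_erase_of_mem ha0c, hcc]
    · refine ⟨x, y, hxy, ?_⟩
      ext z
      simp only [Finset.mem_symmDiff, mem_erase, mem_insert, mem_singleton]
      constructor
      · rintro (⟨⟨hza0, hzc⟩, hzS⟩ | ⟨hzS, hz⟩)
        · have hzA : z ∉ A := by
            intro hzA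
            exact hzS (hAchar z hzA hza0)
          have : z = y := eq_of_sdiff_singleton h2 hzc hzA
          simp [this]
        · push_neg at hz
          have hzc : z ∉ c := by
            intro hzc
            exact (hz (fun h => ha0S (h ▸ hzS))) hzc
          have : z = x := eq_of_sdiff_singleton h1 (hSA hzS) hzc
          simp [this]
      · rintro (rfl | rfl)
        · exact Or.inr ⟨hxS, by push_neg; exact fun _ => hxc⟩
        · refine Or.inl ⟨⟨hya0, hyc⟩, fun h => hyA (hSA h)⟩
    · intro htA
      exact hyA (htA (Finset.mem_erase.mpr ⟨hya0, hyc⟩))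
  · intro t _
    dsimp only
    rw [symmDiff_symmDiff_cancel_right]
  · intro c _
    dsimp only
    rw [symmDiff_symmDiff_cancel_right]


lemma card_transfer (j : ℕ) (p : Finset (Fin n) → Prop)
    [DecidablePred fun T : {s : Finset (Fin n) // s.card = j} => p T.1]
    [DecidablePred fun t : Finset (Fin n) => t.card = j ∧ p t] :
    (univ.filter (fun T : {s : Finset (Fin n) // s.card = j} => p T.1)).card
      = (univ.filter (fun t : Finset (Fin n) => t.card = j ∧ p t)).card := by
  classical
  apply Finset.card_bij (fun T _ => T.1)
  · intro T hT
    simp only [mem_filter, mem_univ, true_and] at hT ⊢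
    exact ⟨T.2, hT⟩
  · intro T₁ _ T₂ _ h
    exact Subtype.ext h
  · intro t ht
    simp only [mem_filter, mem_univ, true_and] at ht
    exact ⟨⟨t, ht.1⟩, by simp only [mem_filter, mem_univ, true_and]; exact ht.2, rfl⟩

lemma degree_eq (j : ℕ) (X : {s : Finset (Fin n) // s.card = j})
    [DecidablePred fun t : Finset (Fin n) => t.card = j ∧ R G X.1 t] :
    (tokenGraph n j G).degree X
      = (univ.filter (fun t : Finset (Fin n) => t.card = j ∧ R G X.1 t)).card := by
  classical
  rw [← card_transfer]
  rw [SimpleGraph.degree, SimpleGraph.neighborFinset_eq_filter]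
  congr 1
  apply Finset.filter_congr
  intro T _
  rw [adj_iff]

lemma split' (j : ℕ) (q P : Finset (Fin n) → Prop)
    [DecidablePred fun t : Finset (Fin n) => t.card = j ∧ q t]
    [DecidablePred fun t : Finset (Fin n) => t.card = j ∧ (P t ∧ q t)]
    [DecidablePred fun t : Finset (Fin n) => t.card = j ∧ (q t ∧ ¬ P t)]
    [DecidablePred P] :
    (univ.filter fun t : Finset (Fin n) => t.card = j ∧ q t).card
      = (univ.filter fun t : Finset (Fin n) => t.card = j ∧ (P t ∧ q t)).card
        + (univ.filter fun t : Finset (Fin n) => t.card = j ∧ (q t ∧ ¬ P t)).card := by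
  classical
  rw [← Finset.card_filter_add_card_filter_not (s := univ.filter fun t => t.card = j ∧ q t) (p := P)]
  congr 1 <;> (rw [Finset.filter_filter]; congr 1; apply Finset.filter_congr; intro t _; tauto)

end TokenAux

open TokenAux in
/-- `B_{n,k,k-1} L_{k-1}(G) = L_k(G) B_{n,k,k-1}`. -/
theorem incl_comm_lap (n k : ℕ) (G : SimpleGraph (Fin n)) (hk : 1 ≤ k) (hkn : k ≤ n) :
    inclMatrix n k (k - 1) * lapTok n (k - 1) G = lapTok n k G * inclMatrix n k (k - 1) := by
  classical
  ext A S
  rw [Matrix.mul_apply, Matrix.mul_apply]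
  have hL : ∀ T : {s : Finset (Fin n) // s.card = k - 1},
      inclMatrix n k (k-1) A T * lapTok n (k-1) G T S
        = (if T = S then (if S.1 ⊆ A.1 then ((tokenGraph n (k-1) G).degree S : ℝ) else 0) else 0)
          - (if T.1 ⊆ A.1 ∧ (tokenGraph n (k-1) G).Adj T S then (1:ℝ) else 0) := by
    intro T
    simp only [inclMatrix, lapTok, SimpleGraph.lapMatrix, Matrix.sub_apply,
      SimpleGraph.degMatrix, Matrix.diagonal_apply, SimpleGraph.adjMatrix_apply]
    rcases eq_or_ne T S with rfl | hTS
    · simp only [if_pos rfl, SimpleGraph.irrefl, if_false, and_false]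
      split_ifs <;> ring
    · simp only [if_neg hTS]
      split_ifs <;> simp_all <;> ring
  have hR : ∀ C : {s : Finset (Fin n) // s.card = k},
      lapTok n k G A C * inclMatrix n k (k-1) C S
        = (if A = C then (if S.1 ⊆ A.1 then ((tokenGraph n k G).degree A : ℝ) else 0) else 0)
          - (if S.1 ⊆ C.1 ∧ (tokenGraph n k G).Adj A C then (1:ℝ) else 0) := by
    intro C
    simp only [inclMatrix, lapTok, SimpleGraph.lapMatrix, Matrix.sub_apply,
      SimpleGraph.degMatrix, Matrix.diagonal_apply, SimpleGraph.adjMatrix_apply]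
    rcases eq_or_ne A C with rfl | hAC
    · simp only [if_pos rfl, SimpleGraph.irrefl, if_false, and_false]
      split_ifs <;> ring
    · simp only [if_neg hAC]
      split_ifs <;> simp_all <;> ring
  rw [Finset.sum_congr rfl (fun T _ => hL T), Finset.sum_congr rfl (fun C _ => hR C),
    Finset.sum_sub_distrib, Finset.sum_sub_distrib,
    Finset.sum_ite_eq' Finset.univ S, Finset.sum_ite_eq Finset.univ A,
    Finset.sum_boole, Finset.sum_boole]
  simp only [mem_univ, if_pos]
  -- counts
  have hcnt1 : (univ.filter (fun T : {s : Finset (Fin n) // s.card = k-1} =>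
      T.1 ⊆ A.1 ∧ (tokenGraph n (k-1) G).Adj T S)).card
      = (univ.filter (fun t : Finset (Fin n) => t.card = k-1 ∧ (t ⊆ A.1 ∧ R G t S.1))).card := by
    rw [← card_transfer (k-1) (fun t => t ⊆ A.1 ∧ R G t S.1)]
    congr 1
    apply Finset.filter_congr
    intro T _
    exact and_congr_right fun _ => by rw [adj_iff]
  have hcnt2 : (univ.filter (fun C : {s : Finset (Fin n) // s.card = k} =>
      S.1 ⊆ C.1 ∧ (tokenGraph n k G).Adj A C)).card
      = (univ.filter (fun c : Finset (Fin n) => c.card = k ∧ (S.1 ⊆ c ∧ R G A.1 c))).card := by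
    rw [← card_transfer k (fun c => S.1 ⊆ c ∧ R G A.1 c)]
    congr 1
    apply Finset.filter_congr
    intro C _
    exact and_congr_right fun _ => by rw [adj_iff]
  rw [hcnt1, hcnt2]
  by_cases hSA : S.1 ⊆ A.1
  · simp only [if_pos hSA]
    have hN1 : (tokenGraph n (k-1) G).degree S
        = (univ.filter (fun t : Finset (Fin n) => t.card = k-1 ∧ R G t S.1)).card := by
      rw [degree_eq]
      congr 1
      apply Finset.filter_congr
      intro t _
      exact and_congr_right fun _ => R_comm
    have hN2 : (tokenGraph n k G).degree A
        = (univ.filter (fun c : Finset (Fin n) => c.card = k ∧ R G A.1 c)).card := degree_eq k A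
    have e1 := split' (k-1) (fun t => R G t S.1) (fun t => t ⊆ A.1)
    have e2 := split' k (fun c => R G A.1 c) (fun c => S.1 ⊆ c)
    have e3 := case1 (G := G) A.2 S.2 hk hSA
    rw [hN1, hN2, e1, e2, e3]
    push_cast
    ring
  · simp only [if_neg hSA]
    have e := case2 (G := G) A.2 S.2 hSA
    rw [e]
end

section
/- For 0 ≤ ℓ ≤ k ≤ ⌊n/2⌋, the inclusion matrix B_{n,k,ℓ} ∈ ℝ^{C(n,k) × C(n,ℓ)}, with entry 1 at (σ, η) iff η ⊆ σ, has full column rank C(n,ℓ). -/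
open Finset Matrix

/-- Number of `m`-subsets of `s` containing a fixed subset `a`. -/
lemma incl_card_supersets {α : Type*} [DecidableEq α] (s a : Finset α) (m : ℕ)
    (has : a ⊆ s) (ham : a.card ≤ m) (hm : m ≤ s.card) :
    ((s.powersetCard m).filter (fun t => a ⊆ t)).card
      = (s.card - a.card).choose (m - a.card) := by
  have key : ((s.powersetCard m).filter (fun t => a ⊆ t)).card
      = ((s \ a).powersetCard (s.card - m)).card := by
    apply Finset.card_bij' (fun t _ => s \ t) (fun u _ => s \ u)
    · intro t ht
      simp only [Finset.mem_filter, Finset.mem_powersetCard] at ht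
      rw [Finset.mem_powersetCard]
      exact ⟨Finset.sdiff_subset_sdiff le_rfl ht.2,
        by rw [Finset.card_sdiff_of_subset ht.1.1, ht.1.2]⟩
    · intro u hu
      rw [Finset.mem_powersetCard] at hu
      have hu' : u ⊆ s := hu.1.trans (Finset.sdiff_subset)
      simp only [Finset.mem_filter, Finset.mem_powersetCard]
      refine ⟨⟨Finset.sdiff_subset, ?_⟩, ?_⟩
      · rw [Finset.card_sdiff_of_subset hu', hu.2]; omega
      · intro x hx
        rw [Finset.mem_sdiff]
        refine ⟨has hx, fun hxu => ?_⟩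
        have := hu.1 hxu
        rw [Finset.mem_sdiff] at this
        exact this.2 hx
    · intro t ht
      simp only [Finset.mem_filter, Finset.mem_powersetCard] at ht
      exact Finset.sdiff_sdiff_eq_self ht.1.1
    · intro u hu
      rw [Finset.mem_powersetCard] at hu
      exact Finset.sdiff_sdiff_eq_self (hu.1.trans (Finset.sdiff_subset))
  rw [key, Finset.card_powersetCard, Finset.card_sdiff_of_subset has]
  have h1 : s.card - m = (s.card - a.card) - (m - a.card) := by omega
  have h2 : m - a.card ≤ s.card - a.card := by omega
  rw [h1, Nat.choose_symm h2]

/-- Sums over the subtype of `m`-sets as cardinalities of filters. -/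
lemma incl_sum_ite {n m : ℕ} (P : Finset (Fin n) → Prop) [DecidablePred P] :
    ∑ σ : {s : Finset (Fin n) // s.card = m}, (if P σ.1 then (1 : ℝ) else 0)
      = ((Finset.powersetCard m (Finset.univ : Finset (Fin n))).filter P).card := by
  rw [← Finset.sum_subtype (Finset.powersetCard m (Finset.univ : Finset (Fin n)))
      (fun x => Finset.mem_powersetCard_univ) (fun s => if P s then (1 : ℝ) else 0)]
  rw [Finset.sum_boole]

lemma incl_dp_nonneg {m : Type*} [Fintype m] (v : m → ℝ) : 0 ≤ v ⬝ᵥ v :=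
  Finset.sum_nonneg fun i _ => mul_self_nonneg _

lemma incl_entry_eq {n k l : ℕ} (σ : {s : Finset (Fin n) // s.card = k})
    (η : {s : Finset (Fin n) // s.card = l}) :
    inclMatrix n k l σ η = if η.1 ⊆ σ.1 then 1 else 0 := rfl

/-- The key commutation identity `UᵀU = LLᵀ + (n - 2l)·1` for `l ≥ 1`. -/
lemma incl_key_identity (n l : ℕ) (hl : 1 ≤ l) (hn : 2 * l + 2 ≤ n) :
    (inclMatrix n (l+1) l)ᵀ * inclMatrix n (l+1) l
      = inclMatrix n l (l-1) * (inclMatrix n l (l-1))ᵀ + ((n : ℝ) - 2*l) • 1 := by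
  ext η μ
  have hηc : η.1.card = l := η.2
  have hμc : μ.1.card = l := μ.2
  have hcards : (η.1 ∩ μ.1).card + (η.1 ∪ μ.1).card = l + l := by
    rw [Finset.card_inter_add_card_union, hηc, hμc]
  have hLHS : ((inclMatrix n (l+1) l)ᵀ * inclMatrix n (l+1) l) η μ
      = (((Finset.powersetCard (l+1) (Finset.univ : Finset (Fin n))).filter
          (fun s => η.1 ∪ μ.1 ⊆ s)).card : ℝ) := by
    rw [Matrix.mul_apply]
    rw [show (∑ σ, (inclMatrix n (l+1) l)ᵀ η σ * inclMatrix n (l+1) l σ μ)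
        = ∑ σ : {s : Finset (Fin n) // s.card = l+1},
          (if η.1 ∪ μ.1 ⊆ σ.1 then (1:ℝ) else 0) from
      Finset.sum_congr rfl (fun σ _ => by
        simp only [Matrix.transpose_apply, inclMatrix, Finset.union_subset_iff]
        split_ifs <;> simp_all)]
    exact incl_sum_ite (fun s => η.1 ∪ μ.1 ⊆ s)
  have hRHS : (inclMatrix n l (l-1) * (inclMatrix n l (l-1))ᵀ) η μ
      = ((η.1 ∩ μ.1).card.choose (l-1) : ℝ) := by
    rw [Matrix.mul_apply]
    rw [show (∑ τ, inclMatrix n l (l-1) η τ * (inclMatrix n l (l-1))ᵀ τ μ)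
        = ∑ τ : {s : Finset (Fin n) // s.card = l-1},
          (if τ.1 ⊆ η.1 ∩ μ.1 then (1:ℝ) else 0) from
      Finset.sum_congr rfl (fun τ _ => by
        simp only [Matrix.transpose_apply, inclMatrix, Finset.subset_inter_iff]
        split_ifs <;> simp_all)]
    rw [incl_sum_ite (fun t => t ⊆ η.1 ∩ μ.1)]
    congr 2
    rw [show ((Finset.powersetCard (l-1) (Finset.univ : Finset (Fin n))).filter
        (fun t => t ⊆ η.1 ∩ μ.1)) = Finset.powersetCard (l-1) (η.1 ∩ μ.1) from by
      ext t
      simp [Finset.mem_powersetCard, Finset.mem_powersetCard_univ, and_comm]]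
    exact Finset.card_powersetCard _ _
  rw [hLHS]
  simp only [Matrix.add_apply, Matrix.smul_apply, hRHS, Matrix.one_apply, smul_eq_mul]
  by_cases hem : η = μ
  · subst hem
    rw [if_pos rfl]
    rw [show η.1 ∪ η.1 = η.1 from Finset.union_self _]
    rw [incl_card_supersets _ _ _ (Finset.subset_univ _) (by omega)
        (by rw [Finset.card_univ, Fintype.card_fin]; omega)]
    rw [Finset.card_univ, Fintype.card_fin, hηc, Finset.inter_self, hηc]
    rw [show l + 1 - l = 1 from by omega, Nat.choose_one_right,
      show l.choose (l-1) = l.choose (l - (l-1)) from (Nat.choose_symm (by omega)).symm,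
      show l - (l-1) = 1 from by omega, Nat.choose_one_right]
    rw [Nat.cast_sub (by omega : l ≤ n)]
    ring
  · rw [if_neg hem, mul_zero, add_zero]
    have hne : η.1 ≠ μ.1 := fun h => hem (Subtype.ext h)
    have hlt : (η.1 ∩ μ.1).card < l := by
      rcases lt_or_eq_of_le (le_trans (Finset.card_le_card Finset.inter_subset_left)
        hηc.le) with h | h
      · exact h
      · exfalso
        have : η.1 ∩ μ.1 = η.1 :=
          Finset.eq_of_subset_of_card_le Finset.inter_subset_left (by omega)
        have hsub : η.1 ⊆ μ.1 := by
          rw [← this]; exact Finset.inter_subset_right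
        exact hne (Finset.eq_of_subset_of_card_le hsub (by omega))
    by_cases hc : (η.1 ∩ μ.1).card = l - 1
    · have hcu : (η.1 ∪ μ.1).card = l + 1 := by omega
      rw [incl_card_supersets _ _ _ (Finset.subset_univ _) (by omega)
          (by rw [Finset.card_univ, Fintype.card_fin]; omega)]
      rw [Finset.card_univ, Fintype.card_fin, hcu, Nat.sub_self, Nat.choose_zero_right,
        hc, Nat.choose_self]
    · have hcu : l + 1 < (η.1 ∪ μ.1).card := by omega
      rw [show ((Finset.powersetCard (l+1) (Finset.univ : Finset (Fin n))).filter
          (fun s => η.1 ∪ μ.1 ⊆ s)) = ∅ from by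
        rw [Finset.filter_eq_empty_iff]
        intro s hs hsub
        rw [Finset.mem_powersetCard_univ] at hs
        have := Finset.card_le_card hsub
        omega]
      rw [Nat.choose_eq_zero_of_lt (by omega)]
      simp

/-- Injectivity of the up operator `U_l` for `2l + 2 ≤ n`. -/
lemma incl_U_inj (n l : ℕ) (hn : 2 * l + 2 ≤ n) (x : {s : Finset (Fin n) // s.card = l} → ℝ)
    (hx : (inclMatrix n (l+1) l).mulVec x = 0) : x = 0 := by
  rcases Nat.eq_zero_or_pos l with hl0 | hl
  · subst hl0
    haveI : NeZero n := ⟨by omega⟩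
    haveI : Unique {s : Finset (Fin n) // s.card = 0} :=
      ⟨⟨⟨∅, Finset.card_empty⟩⟩, fun η => Subtype.ext (Finset.card_eq_zero.mp η.2)⟩
    have h := congrFun hx ⟨{0}, Finset.card_singleton _⟩
    simp only [Matrix.mulVec, dotProduct, Pi.zero_apply] at h
    rw [Fintype.sum_unique] at h
    simp only [inclMatrix] at h
    have hd0 : ((default : {s : Finset (Fin n) // s.card = 0}) : Finset (Fin n)) = ∅ :=
      Finset.card_eq_zero.mp (default : {s : Finset (Fin n) // s.card = 0}).2
    rw [hd0, if_pos (Finset.empty_subset _)] at h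
    funext η
    rw [Unique.eq_default η]
    simpa using h
  · set U := inclMatrix n (l+1) l
    set L := inclMatrix n l (l-1)
    have key := incl_key_identity n l hl hn
    have e0 : (U.mulVec x) ⬝ᵥ (U.mulVec x) = 0 := by rw [hx]; simp
    have e1 : x ⬝ᵥ ((Uᵀ * U).mulVec x) = (U.mulVec x) ⬝ᵥ (U.mulVec x) := by
      rw [← Matrix.mulVec_mulVec, Matrix.dotProduct_mulVec, Matrix.vecMul_transpose]
    have e2 : x ⬝ᵥ ((L * Lᵀ).mulVec x) = (Lᵀ.mulVec x) ⬝ᵥ (Lᵀ.mulVec x) := by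
      rw [← Matrix.mulVec_mulVec, Matrix.dotProduct_mulVec, ← Matrix.mulVec_transpose]
    have e3 : x ⬝ᵥ ((((n : ℝ) - 2*l) • (1 : Matrix _ _ ℝ)).mulVec x)
        = ((n : ℝ) - 2*l) * (x ⬝ᵥ x) := by
      rw [Matrix.smul_mulVec, Matrix.one_mulVec, dotProduct_smul, smul_eq_mul]
    have hsum : 0 = (Lᵀ.mulVec x) ⬝ᵥ (Lᵀ.mulVec x) + ((n : ℝ) - 2*l) * (x ⬝ᵥ x) := by
      rw [← e2, ← e3, ← dotProduct_add, ← Matrix.add_mulVec, ← key, e1, e0]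
    have h1 : (0:ℝ) ≤ (Lᵀ.mulVec x) ⬝ᵥ (Lᵀ.mulVec x) := incl_dp_nonneg _
    have h2 : (0:ℝ) ≤ x ⬝ᵥ x := incl_dp_nonneg _
    have h3 : (0:ℝ) < (n : ℝ) - 2*l := by
      have : (2*l + 2 : ℝ) ≤ n := by exact_mod_cast hn
      linarith
    have hx0 : x ⬝ᵥ x = 0 := by nlinarith
    exact dotProduct_self_eq_zero.mp hx0

/-- Composition identity: `B_{n,k+1,k} * B_{n,k,l} = (k+1-l) • B_{n,k+1,l}`. -/
lemma incl_comp (n k l : ℕ) (hlk : l ≤ k) (hk : k + 1 ≤ n) :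
    inclMatrix n (k+1) k * inclMatrix n k l
      = ((k + 1 - l : ℕ) : ℝ) • inclMatrix n (k+1) l := by
  ext σ η
  have hσc : σ.1.card = k + 1 := σ.2
  have hηc : η.1.card = l := η.2
  rw [Matrix.mul_apply]
  rw [show (∑ τ, inclMatrix n (k+1) k σ τ * inclMatrix n k l τ η)
      = ∑ τ : {s : Finset (Fin n) // s.card = k},
        (if τ.1 ⊆ σ.1 ∧ η.1 ⊆ τ.1 then (1:ℝ) else 0) from
    Finset.sum_congr rfl (fun τ _ => by
      simp only [inclMatrix]
      split_ifs <;> simp_all)]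
  rw [incl_sum_ite (fun t => t ⊆ σ.1 ∧ η.1 ⊆ t)]
  simp only [Matrix.smul_apply, inclMatrix, smul_eq_mul]
  by_cases hsub : η.1 ⊆ σ.1
  · rw [if_pos hsub, mul_one]
    rw [show ((Finset.powersetCard k (Finset.univ : Finset (Fin n))).filter
        (fun t => t ⊆ σ.1 ∧ η.1 ⊆ t))
        = ((σ.1.powersetCard k).filter (fun t => η.1 ⊆ t)) from by
      ext t
      simp only [Finset.mem_filter, Finset.mem_powersetCard]
      constructor
      · rintro ⟨⟨-, hc⟩, h1, h2⟩
        exact ⟨⟨h1, hc⟩, h2⟩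
      · rintro ⟨⟨h1, hc⟩, h2⟩
        exact ⟨⟨Finset.subset_univ t, hc⟩, h1, h2⟩]
    rw [incl_card_supersets σ.1 η.1 k hsub (by omega : η.1.card ≤ k) (by omega : k ≤ σ.1.card)]
    rw [hσc, hηc]
    norm_cast
    rw [show k + 1 - l = (k - l) + 1 from by omega]
    exact Nat.choose_succ_self_right _
  · rw [if_neg hsub, mul_zero]
    rw [show ((Finset.powersetCard k (Finset.univ : Finset (Fin n))).filter
        (fun t => t ⊆ σ.1 ∧ η.1 ⊆ t)) = ∅ from by
      rw [Finset.filter_eq_empty_iff]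
      intro t _ ht
      exact hsub (ht.2.trans ht.1)]
    simp

lemma incl_one (n l : ℕ) : inclMatrix n l l = 1 := by
  ext σ η
  rw [Matrix.one_apply, incl_entry_eq]
  congr 1
  simp only [eq_iff_iff]
  constructor
  · intro h
    exact (Subtype.ext (Finset.eq_of_subset_of_card_le h (by rw [σ.2, η.2]))).symm
  · intro h
    rw [h]

lemma incl_inj (n l d : ℕ) (hk : 2 * (l + d) ≤ n) :
    Function.Injective (inclMatrix n (l + d) l).mulVecLin := by
  induction d with
  | zero =>
    rw [Nat.add_zero, incl_one]
    simp only [Matrix.mulVecLin_one]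
    exact fun a b h => h
  | succ d ih =>
    have hk' : 2 * (l + d) ≤ n := by omega
    have hcomp := incl_comp n (l + d) l (Nat.le_add_right _ _) (by omega)
    intro x y hxy
    have hU : ∀ z, (inclMatrix n ((l+d)+1) (l+d)).mulVec z = 0 → z = 0 :=
      fun z hz => incl_U_inj n (l + d) (by omega) z hz
    have step : (inclMatrix n (l + d) l).mulVec x = (inclMatrix n (l + d) l).mulVec y := by
      have hz : (inclMatrix n ((l+d)+1) (l+d)).mulVec
          ((inclMatrix n (l + d) l).mulVec x - (inclMatrix n (l + d) l).mulVec y) = 0 := by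
        rw [Matrix.mulVec_sub, sub_eq_zero, Matrix.mulVec_mulVec, Matrix.mulVec_mulVec, hcomp,
          Matrix.smul_mulVec, Matrix.smul_mulVec]
        have hx' : (inclMatrix n (l + d + 1) l).mulVec x
            = (inclMatrix n (l + d + 1) l).mulVec y := hxy
        rw [hx']
      have := hU _ hz
      exact sub_eq_zero.mp this
    exact ih hk' step

/-- For `0 ≤ l ≤ k ≤ ⌊n/2⌋`, the inclusion matrix `B_{n,k,l}` has full column rank `C(n,l)`. -/
theorem inclMatrix_rank (n k l : ℕ) (hlk : l ≤ k) (hk : k ≤ n / 2) :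
    (inclMatrix n k l).rank = Nat.choose n l := by
  have h2k : 2 * k ≤ n := by omega
  have hd : l + (k - l) = k := by omega
  have hinj : Function.Injective (inclMatrix n k l).mulVecLin := by
    have := incl_inj n l (k - l) (by omega)
    rwa [hd] at this
  rw [Matrix.rank, LinearMap.finrank_range_of_inj hinj,
    Module.finrank_fintype_fun_eq_card, Fintype.card_finset_len, Fintype.card_fin]
end

section
/- Let G be a graph on [n], 2 ≤ k ≤ ⌊n/2⌋. If λ is an eigenvalue of L_k(G) admitting an eigenvector φ with B_{n,k,k−1}ᵀ φ = 0, then λ ≥ (k/(k−1))·μ − k, where μ is the minimum of ⟨L_{k−1}(G)ψ, ψ⟩/‖ψ‖² over nonzero ψ with B_{n,k−1,k−2}ᵀ ψ = 0. -/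
open Finset Matrix

section AuxLap
variable {V : Type*} [Fintype V] [DecidableEq V]

lemma lapQuad (H : SimpleGraph V) [DecidableRel H.Adj] (x : V → ℝ) :
    (H.lapMatrix ℝ *ᵥ x) ⬝ᵥ x =
      (∑ i, ∑ j, if H.Adj i j then (x i - x j)^2 else 0) / 2 := by
  rw [dotProduct_comm, ← Matrix.toLinearMap₂'_apply', SimpleGraph.lapMatrix_toLinearMap₂']

lemma lapQuad_nonneg (H : SimpleGraph V) [DecidableRel H.Adj] (x : V → ℝ) :
    0 ≤ (H.lapMatrix ℝ *ᵥ x) ⬝ᵥ x := by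
  rw [lapQuad]
  apply div_nonneg _ (by norm_num)
  refine Finset.sum_nonneg fun i _ => Finset.sum_nonneg fun j _ => ?_
  split
  · exact sq_nonneg _
  · exact le_refl 0

lemma dp_self_nonneg {m : Type*} [Fintype m] (x : m → ℝ) : 0 ≤ x ⬝ᵥ x :=
  Finset.sum_nonneg fun i _ => mul_self_nonneg _

end AuxLap

section AuxFinset
variable {α : Type*} [DecidableEq α]

lemma symmDiff_insert_insert {A B : Finset α} {v : α} (hA : v ∉ A) (hB : v ∉ B) :
    symmDiff (insert v A) (insert v B) = symmDiff A B := by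
  ext x
  by_cases hx : x = v <;>
    simp [Finset.mem_symmDiff, Finset.mem_insert, hx, hA, hB]

lemma symmDiff_erase_erase {A B : Finset α} {v : α} (hA : v ∈ A) (hB : v ∈ B) :
    symmDiff (A.erase v) (B.erase v) = symmDiff A B := by
  ext x
  by_cases hx : x = v <;>
    simp [Finset.mem_symmDiff, Finset.mem_erase, hx, hA, hB]

lemma erase_inter_erase {A B : Finset α} (v : α) :
    (A.erase v) ∩ (B.erase v) = (A ∩ B).erase v := by
  ext x; simp [Finset.mem_erase, Finset.mem_inter]; tauto

end AuxFinset

section AuxTok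

lemma tok_adj {n m : ℕ} (G : SimpleGraph (Fin n)) (A B : {s : Finset (Fin n) // s.card = m}) :
    (tokenGraph n m G).Adj A B ↔
      A ≠ B ∧ (A.1 ∩ B.1).card = m - 1 ∧ ∃ u v, G.Adj u v ∧ symmDiff A.1 B.1 = {u, v} := by
  rw [tokenGraph, SimpleGraph.fromRel_adj]
  constructor
  · rintro ⟨hne, h | h⟩
    · exact ⟨hne, h⟩
    · refine ⟨hne, ?_, ?_⟩
      · rw [Finset.inter_comm]; exact h.1
      · obtain ⟨u, v, huv, hs⟩ := h.2
        exact ⟨u, v, huv, by rwa [symmDiff_comm] at hs⟩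
  · rintro ⟨hne, h1, h2⟩
    exact ⟨hne, Or.inl ⟨h1, h2⟩⟩

/-- The insert/erase bijection between `(k-1)`-sets avoiding `v` and `k`-sets containing `v`. -/
lemma sum_insert_bij {n k : ℕ} (hk : 1 ≤ k) (v : Fin n) (f : Finset (Fin n) → ℝ) :
    ∑ A : {s : Finset (Fin n) // s.card = k - 1}, (if v ∈ A.1 then 0 else f (insert v A.1))
      = ∑ S : {s : Finset (Fin n) // s.card = k}, (if v ∈ S.1 then f S.1 else 0) := by
  classical
  rw [← Finset.sum_filter_add_sum_filter_not Finset.univ (fun A => v ∈ A.1),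
      ← Finset.sum_filter_add_sum_filter_not Finset.univ (fun S => v ∈ S.1)]
  have h1 : ∑ A ∈ Finset.univ.filter (fun A : {s : Finset (Fin n) // s.card = k - 1} => v ∈ A.1),
      (if v ∈ A.1 then 0 else f (insert v A.1)) = 0 := by
    apply Finset.sum_eq_zero; intro A hA
    rw [if_pos (Finset.mem_filter.mp hA).2]
  have h2 : ∑ S ∈ Finset.univ.filter (fun S : {s : Finset (Fin n) // s.card = k} => ¬ v ∈ S.1),
      (if v ∈ S.1 then f S.1 else 0) = 0 := by
    apply Finset.sum_eq_zero; intro S hS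
    rw [if_neg (Finset.mem_filter.mp hS).2]
  rw [h1, h2, zero_add, add_zero]
  refine Finset.sum_bij' (i := fun A hA =>
      (⟨insert v A.1, ?_⟩ : {s : Finset (Fin n) // s.card = k}))
    (j := fun S hS => (⟨S.1.erase v, ?_⟩ : {s : Finset (Fin n) // s.card = k - 1}))
    ?_ ?_ ?_ ?_ ?_
  · rw [Finset.card_insert_of_notMem (Finset.mem_filter.mp hA).2, A.2]; omega
  · rw [Finset.card_erase_of_mem (Finset.mem_filter.mp hS).2, S.2]
  · intro A hA
    simp only [Finset.mem_filter, Finset.mem_univ, true_and]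
    exact Finset.mem_insert_self v A.1
  · intro S hS
    simp only [Finset.mem_filter, Finset.mem_univ, true_and]
    exact Finset.notMem_erase v S.1
  · intro A hA
    exact Subtype.ext (Finset.erase_insert (Finset.mem_filter.mp hA).2)
  · intro S hS
    exact Subtype.ext (Finset.insert_erase (Finset.mem_filter.mp hS).2)
  · intro A hA
    rw [if_neg (Finset.mem_filter.mp hA).2, if_pos (Finset.mem_insert_self v A.1)]

end AuxTok

section AuxAdj
variable {n k : ℕ} (G : SimpleGraph (Fin n))

lemma adj_insert (hk : 2 ≤ k) {A B : {s : Finset (Fin n) // s.card = k - 1}}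
    (h : (tokenGraph n (k-1) G).Adj A B) {v : Fin n} (hvA : v ∉ A.1) (hvB : v ∉ B.1)
    {SA SB : {s : Finset (Fin n) // s.card = k}}
    (hSA : SA.1 = insert v A.1) (hSB : SB.1 = insert v B.1) :
    (tokenGraph n k G).Adj SA SB := by
  rw [tok_adj] at h ⊢
  obtain ⟨hne, hcard, u, w, huw, hsd⟩ := h
  refine ⟨?_, ?_, u, w, huw, ?_⟩
  · intro hEq
    apply hne
    have : insert v A.1 = insert v B.1 := by rw [← hSA, ← hSB, hEq]
    apply Subtype.ext
    rw [← Finset.erase_insert hvA, this, Finset.erase_insert hvB]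
  · rw [hSA, hSB, ← Finset.insert_inter_distrib,
      Finset.card_insert_of_notMem (fun hm => hvA (Finset.mem_inter.mp hm).1), hcard]
    omega
  · rw [hSA, hSB, symmDiff_insert_insert hvA hvB, hsd]

lemma adj_erase (hk : 2 ≤ k) {S T : {s : Finset (Fin n) // s.card = k}}
    (h : (tokenGraph n k G).Adj S T) {v : Fin n} (hvS : v ∈ S.1) (hvT : v ∈ T.1)
    {A B : {s : Finset (Fin n) // s.card = k - 1}}
    (hA : A.1 = S.1.erase v) (hB : B.1 = T.1.erase v) :
    (tokenGraph n (k-1) G).Adj A B := by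
  rw [tok_adj] at h ⊢
  obtain ⟨hne, hcard, u, w, huw, hsd⟩ := h
  refine ⟨?_, ?_, u, w, huw, ?_⟩
  · intro hEq
    apply hne
    have : S.1.erase v = T.1.erase v := by rw [← hA, ← hB, hEq]
    apply Subtype.ext
    rw [← Finset.insert_erase hvS, this, Finset.insert_erase hvT]
  · rw [hA, hB, erase_inter_erase,
      Finset.card_erase_of_mem (Finset.mem_inter.mpr ⟨hvS, hvT⟩), hcard]
  · rw [hA, hB, symmDiff_erase_erase hvS hvT, hsd]

end AuxAdj

section AuxPsi
variable {n k : ℕ}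

/-- `φ` extended to all finsets by zero. -/
noncomputable def PhiFun (n k : ℕ) (φ : {s : Finset (Fin n) // s.card = k} → ℝ) :
    Finset (Fin n) → ℝ :=
  fun s => if h : s.card = k then φ ⟨s, h⟩ else 0

/-- the auxiliary vectors `ψ_v`. -/
noncomputable def psiFun (n k : ℕ) (φ : {s : Finset (Fin n) // s.card = k} → ℝ) (v : Fin n) :
    {s : Finset (Fin n) // s.card = k - 1} → ℝ :=
  fun A => if v ∈ A.1 then 0 else PhiFun n k φ (insert v A.1)

lemma Phi_coe (φ : {s : Finset (Fin n) // s.card = k} → ℝ)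
    (S : {s : Finset (Fin n) // s.card = k}) : PhiFun n k φ S.1 = φ S := by
  rw [PhiFun]; exact dif_pos S.2

lemma psi_kernel (hk : 2 ≤ k) (φ : {s : Finset (Fin n) // s.card = k} → ℝ)
    (hker : (inclMatrix n k (k - 1))ᵀ *ᵥ φ = 0) (v : Fin n) :
    (inclMatrix n (k - 1) (k - 2))ᵀ *ᵥ psiFun n k φ v = 0 := by
  classical
  funext η
  simp only [Matrix.mulVec, dotProduct, Matrix.transpose_apply, inclMatrix,
    Pi.zero_apply]
  by_cases hv : v ∈ η.1
  · apply Finset.sum_eq_zero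
    intro A _
    by_cases hsub : η.1 ⊆ A.1
    · rw [psiFun, if_pos (hsub hv), mul_zero]
    · rw [if_neg hsub, zero_mul]
  · have hη' : (insert v η.1).card = k - 1 := by
      rw [Finset.card_insert_of_notMem hv, η.2]; omega
    have h0 := congrFun hker ⟨insert v η.1, hη'⟩
    simp only [Matrix.mulVec, dotProduct, Matrix.transpose_apply, inclMatrix,
      Pi.zero_apply] at h0
    have hstep : ∀ A : {s : Finset (Fin n) // s.card = k - 1},
        (if η.1 ⊆ A.1 then (1:ℝ) else 0) * psiFun n k φ v A
          = if v ∈ A.1 then 0 else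
              ((if insert v η.1 ⊆ insert v A.1 then (1:ℝ) else 0) * PhiFun n k φ (insert v A.1)) := by
      intro A
      by_cases hvA : v ∈ A.1
      · rw [if_pos hvA, psiFun, if_pos hvA, mul_zero]
      · rw [if_neg hvA, psiFun, if_neg hvA]
        congr 1
        have : η.1 ⊆ A.1 ↔ insert v η.1 ⊆ insert v A.1 := by
          constructor
          · exact fun h => Finset.insert_subset_insert v h
          · intro h x hx
            rcases Finset.mem_insert.mp (h (Finset.mem_insert_of_mem hx)) with h1 | h1
            · exact absurd (h1 ▸ hx) hv
            · exact h1
        simp only [this]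
    have e1 := Finset.sum_congr (rfl : (Finset.univ : Finset {s : Finset (Fin n) // s.card = k - 1}) = Finset.univ) (fun A _ => hstep A)
    have e2 := sum_insert_bij (n := n) (by omega : 1 ≤ k) v
        (fun s => (if insert v η.1 ⊆ s then (1:ℝ) else 0) * PhiFun n k φ s)
    have e3 : ∑ S : {s : Finset (Fin n) // s.card = k},
        (if v ∈ S.1 then (if insert v η.1 ⊆ S.1 then (1:ℝ) else 0) * PhiFun n k φ S.1 else 0)
        = ∑ S : {s : Finset (Fin n) // s.card = k},
            (if insert v η.1 ⊆ S.1 then (1:ℝ) else 0) * φ S := by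
      apply Finset.sum_congr rfl
      intro S _
      by_cases hvS : v ∈ S.1
      · rw [if_pos hvS, Phi_coe]
      · rw [if_neg hvS, if_neg (fun hsub => hvS (hsub (Finset.mem_insert_self v η.1))), zero_mul]
    rw [e1, e2, e3]
    exact h0

lemma psi_norm (hk : 2 ≤ k) (φ : {s : Finset (Fin n) // s.card = k} → ℝ) :
    ∑ v : Fin n, (psiFun n k φ v ⬝ᵥ psiFun n k φ v) = (k : ℝ) * (φ ⬝ᵥ φ) := by
  classical
  have hstep : ∀ v, psiFun n k φ v ⬝ᵥ psiFun n k φ v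
      = ∑ S : {s : Finset (Fin n) // s.card = k}, (if v ∈ S.1 then (φ S)^2 else 0) := by
    intro v
    rw [dotProduct]
    have h1 : ∀ A : {s : Finset (Fin n) // s.card = k - 1},
        psiFun n k φ v A * psiFun n k φ v A
          = if v ∈ A.1 then 0 else (PhiFun n k φ (insert v A.1))^2 := by
      intro A
      by_cases hvA : v ∈ A.1 <;> simp [psiFun, hvA, pow_two]
    rw [Finset.sum_congr rfl (fun A _ => h1 A),
      sum_insert_bij (by omega) v (fun s => (PhiFun n k φ s)^2)]
    apply Finset.sum_congr rfl
    intro S _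
    by_cases hvS : v ∈ S.1 <;> simp [hvS, Phi_coe]
  rw [Finset.sum_congr rfl (fun v _ => hstep v), Finset.sum_comm]
  rw [dotProduct, Finset.mul_sum]
  apply Finset.sum_congr rfl
  intro S _
  rw [Finset.sum_ite_mem, Finset.univ_inter, Finset.sum_const, nsmul_eq_mul, S.2, pow_two]

end AuxPsi

section AuxStruct
variable {n k : ℕ} {G : SimpleGraph (Fin n)}

lemma adj_struct (hk : 2 ≤ k) {A B : {s : Finset (Fin n) // s.card = k - 1}}
    (h : (tokenGraph n (k-1) G).Adj A B) :
    ∃ a b : Fin n, a ∈ A.1 ∧ a ∉ B.1 ∧ b ∈ B.1 ∧ b ∉ A.1 ∧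
      (∀ x ∈ A.1, x ∉ B.1 → x = a) ∧ (∀ x ∈ B.1, x ∉ A.1 → x = b) ∧
      insert a B.1 = A.1 ∪ B.1 ∧ insert b A.1 = A.1 ∪ B.1 ∧ (A.1 ∪ B.1).card = k := by
  rw [tok_adj] at h
  obtain ⟨hne, hcard, -⟩ := h
  have hAc := A.2; have hBc := B.2
  have h1 : (A.1 \ B.1).card = 1 := by
    have := Finset.card_inter_add_card_sdiff A.1 B.1
    omega
  have h2 : (B.1 \ A.1).card = 1 := by
    have := Finset.card_inter_add_card_sdiff B.1 A.1
    rw [Finset.inter_comm] at this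
    omega
  obtain ⟨a, ha⟩ := Finset.card_eq_one.mp h1
  obtain ⟨b, hb⟩ := Finset.card_eq_one.mp h2
  have haA : a ∈ A.1 ∧ a ∉ B.1 := Finset.mem_sdiff.mp (by rw [ha]; exact Finset.mem_singleton_self a)
  have hbB : b ∈ B.1 ∧ b ∉ A.1 := Finset.mem_sdiff.mp (by rw [hb]; exact Finset.mem_singleton_self b)
  have keyA : ∀ x ∈ A.1, x ∉ B.1 → x = a := fun x hx hxB =>
    Finset.mem_singleton.mp (ha ▸ Finset.mem_sdiff.mpr ⟨hx, hxB⟩)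
  have keyB : ∀ x ∈ B.1, x ∉ A.1 → x = b := fun x hx hxA =>
    Finset.mem_singleton.mp (hb ▸ Finset.mem_sdiff.mpr ⟨hx, hxA⟩)
  refine ⟨a, b, haA.1, haA.2, hbB.1, hbB.2, keyA, keyB, ?_, ?_, ?_⟩
  · ext x
    simp only [Finset.mem_insert, Finset.mem_union]
    constructor
    · rintro (rfl | hx)
      · exact Or.inl haA.1
      · exact Or.inr hx
    · rintro (hx | hx)
      · by_cases hxB : x ∈ B.1
        · exact Or.inr hxB
        · exact Or.inl (keyA x hx hxB)
      · exact Or.inr hx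
  · ext x
    simp only [Finset.mem_insert, Finset.mem_union]
    constructor
    · rintro (rfl | hx)
      · exact Or.inr hbB.1
      · exact Or.inl hx
    · rintro (hx | hx)
      · exact Or.inr hx
      · by_cases hxA : x ∈ A.1
        · exact Or.inr hxA
        · exact Or.inl (keyB x hx hxA)
  · have := Finset.card_union_add_card_inter A.1 B.1
    omega

end AuxStruct

section AuxPair
variable {n k : ℕ} {G : SimpleGraph (Fin n)}

lemma pair_sum (hk : 2 ≤ k) (φ : {s : Finset (Fin n) // s.card = k} → ℝ)
    {A B : {s : Finset (Fin n) // s.card = k - 1}}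
    (h : (tokenGraph n (k-1) G).Adj A B) :
    ∑ v : Fin n, (psiFun n k φ v A - psiFun n k φ v B)^2
      = (∑ v : Fin n, if v ∈ A.1 ∪ B.1 then 0 else
            (PhiFun n k φ (insert v A.1) - PhiFun n k φ (insert v B.1))^2)
        + 2 * (PhiFun n k φ (A.1 ∪ B.1))^2 := by
  classical
  obtain ⟨a, b, haA, haB, hbB, hbA, keyA, keyB, hInsB, hInsA, hcardU⟩ := adj_struct hk h
  have hpoint : ∀ v : Fin n, (psiFun n k φ v A - psiFun n k φ v B)^2
      = (if v ∈ A.1 ∪ B.1 then 0 else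
            (PhiFun n k φ (insert v A.1) - PhiFun n k φ (insert v B.1))^2)
        + ((if v = a then (PhiFun n k φ (A.1 ∪ B.1))^2 else 0)
          + (if v = b then (PhiFun n k φ (A.1 ∪ B.1))^2 else 0)) := by
    intro v
    by_cases hvA : v ∈ A.1 <;> by_cases hvB : v ∈ B.1
    · have hva : v ≠ a := fun hv => haB (hv ▸ hvB)
      have hvb : v ≠ b := fun hv => hbA (hv ▸ hvA)
      simp [psiFun, hvA, hvB, hva, hvb, Finset.mem_union]
    · have hva : v = a := keyA v hvA hvB
      subst hva
      have hvb : v ≠ b := fun hv => hbA (hv ▸ hvA)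
      have : insert v B.1 = A.1 ∪ B.1 := hInsB
      simp [psiFun, hvA, hvB, hvb, Finset.mem_union, this]
    · have hvb : v = b := keyB v hvB hvA
      subst hvb
      have hva : v ≠ a := fun hv => haB (hv ▸ hvB)
      have : insert v A.1 = A.1 ∪ B.1 := hInsA
      simp [psiFun, hvA, hvB, hva, Finset.mem_union, this]
    · have hva : v ≠ a := fun hv => hvA (hv ▸ haA)
      have hvb : v ≠ b := fun hv => hvB (hv ▸ hbB)
      simp [psiFun, hvA, hvB, hva, hvb, Finset.mem_union]
  rw [Finset.sum_congr rfl (fun v _ => hpoint v), Finset.sum_add_distrib,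
    Finset.sum_add_distrib, Finset.sum_ite_eq' Finset.univ a
      (fun _ => (PhiFun n k φ (A.1 ∪ B.1))^2),
    Finset.sum_ite_eq' Finset.univ b (fun _ => (PhiFun n k φ (A.1 ∪ B.1))^2)]
  simp only [Finset.mem_univ, if_pos]
  ring

end AuxPair

section AuxGlobal
variable {n k : ℕ}

lemma U1_eq (hk : 2 ≤ k) (G : SimpleGraph (Fin n))
    (φ : {s : Finset (Fin n) // s.card = k} → ℝ) :
    ∑ A : {s : Finset (Fin n) // s.card = k - 1}, ∑ B : {s : Finset (Fin n) // s.card = k - 1},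
      (if (tokenGraph n (k-1) G).Adj A B then
        (∑ v : Fin n, if v ∈ A.1 ∪ B.1 then 0 else
          (PhiFun n k φ (insert v A.1) - PhiFun n k φ (insert v B.1))^2) else 0)
    = ∑ S : {s : Finset (Fin n) // s.card = k}, ∑ T : {s : Finset (Fin n) // s.card = k},
        (if (tokenGraph n k G).Adj S T then ((k:ℝ) - 1) * (φ S - φ T)^2 else 0) := by
  classical
  have hL : ∀ A B : {s : Finset (Fin n) // s.card = k - 1},
      (if (tokenGraph n (k-1) G).Adj A B then
        (∑ v : Fin n, if v ∈ A.1 ∪ B.1 then 0 else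
          (PhiFun n k φ (insert v A.1) - PhiFun n k φ (insert v B.1))^2) else 0)
      = ∑ v : Fin n, (if (tokenGraph n (k-1) G).Adj A B ∧ v ∉ A.1 ∪ B.1 then
          (PhiFun n k φ (insert v A.1) - PhiFun n k φ (insert v B.1))^2 else 0) := by
    intro A B
    by_cases hadj : (tokenGraph n (k-1) G).Adj A B
    · rw [if_pos hadj]
      apply Finset.sum_congr rfl
      intro v _
      by_cases hm : v ∈ A.1 ∪ B.1 <;> simp [hm, hadj]
    · simp [hadj]
  have hR : ∀ S T : {s : Finset (Fin n) // s.card = k},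
      (if (tokenGraph n k G).Adj S T then ((k:ℝ) - 1) * (φ S - φ T)^2 else 0)
      = ∑ v : Fin n, (if (tokenGraph n k G).Adj S T ∧ v ∈ S.1 ∩ T.1 then
          (φ S - φ T)^2 else 0) := by
    intro S T
    by_cases hadj : (tokenGraph n k G).Adj S T
    · rw [if_pos hadj]
      simp only [hadj, true_and]
      rw [Finset.sum_ite_mem, Finset.univ_inter, Finset.sum_const, nsmul_eq_mul]
      congr 1
      rw [((tok_adj G S T).mp hadj).2.1, Nat.cast_sub (by omega : 1 ≤ k), Nat.cast_one]
    · simp [hadj]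
  rw [Finset.sum_congr rfl (fun A _ => Finset.sum_congr rfl (fun B _ => hL A B)),
    Finset.sum_congr rfl (fun S _ => Finset.sum_congr rfl (fun T _ => hR S T))]
  rw [← Fintype.sum_prod_type (f := fun p : ({s : Finset (Fin n) // s.card = k - 1} ×
      {s : Finset (Fin n) // s.card = k - 1}) => ∑ v : Fin n,
        (if (tokenGraph n (k-1) G).Adj p.1 p.2 ∧ v ∉ p.1.1 ∪ p.2.1 then
          (PhiFun n k φ (insert v p.1.1) - PhiFun n k φ (insert v p.2.1))^2 else 0)),
    ← Fintype.sum_prod_type (f := fun p : ({s : Finset (Fin n) // s.card = k} ×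
      {s : Finset (Fin n) // s.card = k}) => ∑ v : Fin n,
        (if (tokenGraph n k G).Adj p.1 p.2 ∧ v ∈ p.1.1 ∩ p.2.1 then
          (φ p.1 - φ p.2)^2 else 0)),
    ← Fintype.sum_prod_type (f := fun q : (({s : Finset (Fin n) // s.card = k - 1} ×
      {s : Finset (Fin n) // s.card = k - 1}) × Fin n) =>
        (if (tokenGraph n (k-1) G).Adj q.1.1 q.1.2 ∧ q.2 ∉ q.1.1.1 ∪ q.1.2.1 then
          (PhiFun n k φ (insert q.2 q.1.1.1) - PhiFun n k φ (insert q.2 q.1.2.1))^2 else 0)),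
    ← Fintype.sum_prod_type (f := fun q : (({s : Finset (Fin n) // s.card = k} ×
      {s : Finset (Fin n) // s.card = k}) × Fin n) =>
        (if (tokenGraph n k G).Adj q.1.1 q.1.2 ∧ q.2 ∈ q.1.1.1 ∩ q.1.2.1 then
          (φ q.1.1 - φ q.1.2)^2 else 0))]
  rw [← Finset.sum_filter, ← Finset.sum_filter]
  refine Finset.sum_bij'
    (i := fun q hq => ((⟨insert q.2 q.1.1.1, by
        have hm := Finset.mem_filter.mp hq
        have hv : q.2 ∉ q.1.1.1 := fun hx => hm.2.2 (Finset.mem_union_left _ hx)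
        rw [Finset.card_insert_of_notMem hv, q.1.1.2]; omega⟩,
      ⟨insert q.2 q.1.2.1, by
        have hm := Finset.mem_filter.mp hq
        have hv : q.2 ∉ q.1.2.1 := fun hx => hm.2.2 (Finset.mem_union_right _ hx)
        rw [Finset.card_insert_of_notMem hv, q.1.2.2]; omega⟩), q.2))
    (j := fun q hq => ((⟨q.1.1.1.erase q.2, by
        have hm := Finset.mem_filter.mp hq
        rw [Finset.card_erase_of_mem (Finset.mem_inter.mp hm.2.2).1, q.1.1.2]⟩,
      ⟨q.1.2.1.erase q.2, by
        have hm := Finset.mem_filter.mp hq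
        rw [Finset.card_erase_of_mem (Finset.mem_inter.mp hm.2.2).2, q.1.2.2]⟩), q.2))
    ?_ ?_ ?_ ?_ ?_
  · intro q hq
    have hm := Finset.mem_filter.mp hq
    have hvA : q.2 ∉ q.1.1.1 := fun hx => hm.2.2 (Finset.mem_union_left _ hx)
    have hvB : q.2 ∉ q.1.2.1 := fun hx => hm.2.2 (Finset.mem_union_right _ hx)
    refine Finset.mem_filter.mpr ⟨Finset.mem_univ _, ?_, ?_⟩
    · exact adj_insert G hk hm.2.1 hvA hvB rfl rfl
    · exact Finset.mem_inter.mpr ⟨Finset.mem_insert_self _ _, Finset.mem_insert_self _ _⟩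
  · intro q hq
    have hm := Finset.mem_filter.mp hq
    have hvS : q.2 ∈ q.1.1.1 := (Finset.mem_inter.mp hm.2.2).1
    have hvT : q.2 ∈ q.1.2.1 := (Finset.mem_inter.mp hm.2.2).2
    refine Finset.mem_filter.mpr ⟨Finset.mem_univ _, ?_, ?_⟩
    · exact adj_erase G hk hm.2.1 hvS hvT rfl rfl
    · intro hx
      rcases Finset.mem_union.mp hx with h | h
      · exact Finset.notMem_erase _ _ h
      · exact Finset.notMem_erase _ _ h
  · intro q hq
    have hm := Finset.mem_filter.mp hq
    have hvA : q.2 ∉ q.1.1.1 := fun hx => hm.2.2 (Finset.mem_union_left _ hx)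
    have hvB : q.2 ∉ q.1.2.1 := fun hx => hm.2.2 (Finset.mem_union_right _ hx)
    obtain ⟨⟨A, B⟩, v⟩ := q
    simp only [Prod.mk.injEq]
    exact ⟨⟨Subtype.ext (Finset.erase_insert hvA), Subtype.ext (Finset.erase_insert hvB)⟩, trivial⟩
  · intro q hq
    have hm := Finset.mem_filter.mp hq
    have hvS : q.2 ∈ q.1.1.1 := (Finset.mem_inter.mp hm.2.2).1
    have hvT : q.2 ∈ q.1.2.1 := (Finset.mem_inter.mp hm.2.2).2
    obtain ⟨⟨S, T⟩, v⟩ := q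
    simp only [Prod.mk.injEq]
    exact ⟨⟨Subtype.ext (Finset.insert_erase hvS), Subtype.ext (Finset.insert_erase hvT)⟩, trivial⟩
  · intro q hq
    rw [Phi_coe φ ⟨insert q.2 q.1.1.1, _⟩, Phi_coe φ ⟨insert q.2 q.1.2.1, _⟩]

end AuxGlobal

section AuxU2
variable {n k : ℕ}

lemma U2_le (hk : 2 ≤ k) (G : SimpleGraph (Fin n))
    (φ : {s : Finset (Fin n) // s.card = k} → ℝ) :
    ∑ A : {s : Finset (Fin n) // s.card = k - 1}, ∑ B : {s : Finset (Fin n) // s.card = k - 1},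
      (if (tokenGraph n (k-1) G).Adj A B then (PhiFun n k φ (A.1 ∪ B.1))^2 else 0)
      ≤ (k:ℝ) * ((k:ℝ) - 1) * (φ ⬝ᵥ φ) := by
  classical
  rw [← Fintype.sum_prod_type (f := fun p : ({s : Finset (Fin n) // s.card = k - 1} ×
      {s : Finset (Fin n) // s.card = k - 1}) =>
        (if (tokenGraph n (k-1) G).Adj p.1 p.2 then (PhiFun n k φ (p.1.1 ∪ p.2.1))^2 else 0)),
    ← Finset.sum_filter]
  set s := Finset.univ.filter (fun p : ({s : Finset (Fin n) // s.card = k - 1} ×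
      {s : Finset (Fin n) // s.card = k - 1}) => (tokenGraph n (k-1) G).Adj p.1 p.2) with hs
  have hmap : ∀ p ∈ s, p.1.1 ∪ p.2.1 ∈ Finset.powersetCard k (Finset.univ : Finset (Fin n)) := by
    intro p hp
    have hadj := (Finset.mem_filter.mp hp).2
    have hcard := ((tok_adj G p.1 p.2).mp hadj).2.1
    have hu := Finset.card_union_add_card_inter p.1.1 p.2.1
    have h1 := p.1.2; have h2 := p.2.2
    exact Finset.mem_powersetCard_univ.mpr (by omega)
  rw [← Finset.sum_fiberwise_of_maps_to' hmap (fun t => (PhiFun n k φ t)^2)]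
  have hfib : ∀ j ∈ Finset.powersetCard k (Finset.univ : Finset (Fin n)),
      ∑ p ∈ s.filter (fun p => p.1.1 ∪ p.2.1 = j), (PhiFun n k φ j)^2
        ≤ (k:ℝ) * ((k:ℝ) - 1) * (PhiFun n k φ j)^2 := by
    intro j hj
    rw [Finset.sum_const, nsmul_eq_mul]
    refine mul_le_mul_of_nonneg_right ?_ (sq_nonneg _)
    have hjc : j.card = k := Finset.mem_powersetCard_univ.mp hj
    have hinj : ((s.filter (fun p => p.1.1 ∪ p.2.1 = j)).card : ℕ)
        ≤ ((Finset.powersetCard (k-1) j).offDiag).card := by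
      apply Finset.card_le_card_of_injOn (fun p => (p.1.1, p.2.1))
      · intro p hp
        have hm := Finset.mem_filter.mp hp
        have hadj := (Finset.mem_filter.mp hm.1).2
        have hU : p.1.1 ∪ p.2.1 = j := hm.2
        refine Finset.mem_offDiag.mpr ⟨?_, ?_, ?_⟩
        · exact Finset.mem_powersetCard.mpr ⟨hU ▸ Finset.subset_union_left, p.1.2⟩
        · exact Finset.mem_powersetCard.mpr ⟨hU ▸ Finset.subset_union_right, p.2.2⟩
        · exact fun e => hadj.ne (Subtype.ext e)
      · intro p _ p' _ he
        obtain ⟨A, B⟩ := p; obtain ⟨A', B'⟩ := p'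
        simp only [Prod.mk.injEq] at he ⊢
        exact ⟨Subtype.ext he.1, Subtype.ext he.2⟩
    rw [Finset.offDiag_card, Finset.card_powersetCard, hjc] at hinj
    have hch : k.choose (k-1) = k := by
      rw [← Nat.choose_symm (Nat.sub_le k 1), Nat.sub_sub_self (by omega : 1 ≤ k),
        Nat.choose_one_right]
    rw [hch] at hinj
    calc ((s.filter (fun p => p.1.1 ∪ p.2.1 = j)).card : ℝ)
        ≤ ((k * k - k : ℕ) : ℝ) := Nat.cast_le.mpr hinj
      _ = (k:ℝ) * k - k := by
          rw [Nat.cast_sub (Nat.le_mul_of_pos_left k (by omega : 0 < k)), Nat.cast_mul]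
      _ = (k:ℝ) * ((k:ℝ) - 1) := by ring
  calc ∑ j ∈ Finset.powersetCard k (Finset.univ : Finset (Fin n)),
        ∑ p ∈ s.filter (fun p => p.1.1 ∪ p.2.1 = j), (PhiFun n k φ j)^2
      ≤ ∑ j ∈ Finset.powersetCard k (Finset.univ : Finset (Fin n)),
          (k:ℝ) * ((k:ℝ) - 1) * (PhiFun n k φ j)^2 := Finset.sum_le_sum hfib
    _ = (k:ℝ) * ((k:ℝ) - 1) * ∑ j ∈ Finset.powersetCard k (Finset.univ : Finset (Fin n)),
          (PhiFun n k φ j)^2 := by rw [Finset.mul_sum]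
    _ = (k:ℝ) * ((k:ℝ) - 1) * (φ ⬝ᵥ φ) := by
        congr 1
        rw [Finset.sum_subtype (Finset.powersetCard k (Finset.univ : Finset (Fin n)))
          (fun x => Finset.mem_powersetCard_univ) (fun t => (PhiFun n k φ t)^2)]
        rw [dotProduct]
        apply Finset.sum_congr rfl
        intro S _
        rw [Phi_coe, pow_two]
end AuxU2

section AuxQuadBound
variable {n k : ℕ}

lemma psi_quad_bound (hk : 2 ≤ k) (G : SimpleGraph (Fin n))
    (φ : {s : Finset (Fin n) // s.card = k} → ℝ) :
    ∑ v : Fin n, ((lapTok n (k-1) G *ᵥ psiFun n k φ v) ⬝ᵥ psiFun n k φ v)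
      ≤ ((k:ℝ) - 1) * ((lapTok n k G *ᵥ φ) ⬝ᵥ φ) + (k:ℝ) * ((k:ℝ) - 1) * (φ ⬝ᵥ φ) := by
  classical
  have hq1 : ∀ v : Fin n, (lapTok n (k-1) G *ᵥ psiFun n k φ v) ⬝ᵥ psiFun n k φ v
      = (∑ A : {s : Finset (Fin n) // s.card = k - 1},
          ∑ B : {s : Finset (Fin n) // s.card = k - 1},
          if (tokenGraph n (k-1) G).Adj A B then
            (psiFun n k φ v A - psiFun n k φ v B)^2 else 0)/2 := by
    intro v
    simp only [lapTok]
    exact lapQuad _ _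
  have hQ1 : (lapTok n k G *ᵥ φ) ⬝ᵥ φ
      = (∑ S : {s : Finset (Fin n) // s.card = k}, ∑ T : {s : Finset (Fin n) // s.card = k},
          if (tokenGraph n k G).Adj S T then (φ S - φ T)^2 else 0)/2 := by
    simp only [lapTok]
    exact lapQuad _ _
  have e0 : ∀ A B : {s : Finset (Fin n) // s.card = k - 1},
      ∑ v : Fin n, (if (tokenGraph n (k-1) G).Adj A B then
          (psiFun n k φ v A - psiFun n k φ v B)^2 else 0)
        = (if (tokenGraph n (k-1) G).Adj A B then
            (∑ v : Fin n, (psiFun n k φ v A - psiFun n k φ v B)^2) else 0) := by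
    intro A B
    by_cases hadj : (tokenGraph n (k-1) G).Adj A B <;> simp [hadj]
  have e1 : ∀ A B : {s : Finset (Fin n) // s.card = k - 1},
      (if (tokenGraph n (k-1) G).Adj A B then
          (∑ v : Fin n, (psiFun n k φ v A - psiFun n k φ v B)^2) else 0)
        = (if (tokenGraph n (k-1) G).Adj A B then
            (∑ v : Fin n, if v ∈ A.1 ∪ B.1 then 0 else
              (PhiFun n k φ (insert v A.1) - PhiFun n k φ (insert v B.1))^2) else 0)
          + 2 * (if (tokenGraph n (k-1) G).Adj A B then (PhiFun n k φ (A.1 ∪ B.1))^2 else 0) := by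
    intro A B
    by_cases hadj : (tokenGraph n (k-1) G).Adj A B
    · rw [if_pos hadj, if_pos hadj, if_pos hadj, pair_sum hk φ hadj]
    · simp [hadj]
  calc ∑ v : Fin n, ((lapTok n (k-1) G *ᵥ psiFun n k φ v) ⬝ᵥ psiFun n k φ v)
      = ∑ v : Fin n, (∑ A : {s : Finset (Fin n) // s.card = k - 1},
          ∑ B : {s : Finset (Fin n) // s.card = k - 1},
          if (tokenGraph n (k-1) G).Adj A B then
            (psiFun n k φ v A - psiFun n k φ v B)^2 else 0)/2 :=
        Finset.sum_congr rfl (fun v _ => hq1 v)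
    _ = (∑ v : Fin n, ∑ A : {s : Finset (Fin n) // s.card = k - 1},
          ∑ B : {s : Finset (Fin n) // s.card = k - 1},
          if (tokenGraph n (k-1) G).Adj A B then
            (psiFun n k φ v A - psiFun n k φ v B)^2 else 0)/2 := by
        rw [Finset.sum_div]
    _ = (∑ A : {s : Finset (Fin n) // s.card = k - 1},
          ∑ B : {s : Finset (Fin n) // s.card = k - 1}, ∑ v : Fin n,
          if (tokenGraph n (k-1) G).Adj A B then
            (psiFun n k φ v A - psiFun n k φ v B)^2 else 0)/2 := by
        congr 1
        rw [Finset.sum_comm]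
        exact Finset.sum_congr rfl (fun A _ => Finset.sum_comm)
    _ = (∑ A : {s : Finset (Fin n) // s.card = k - 1},
          ∑ B : {s : Finset (Fin n) // s.card = k - 1},
          ((if (tokenGraph n (k-1) G).Adj A B then
            (∑ v : Fin n, if v ∈ A.1 ∪ B.1 then 0 else
              (PhiFun n k φ (insert v A.1) - PhiFun n k φ (insert v B.1))^2) else 0)
          + 2 * (if (tokenGraph n (k-1) G).Adj A B then
              (PhiFun n k φ (A.1 ∪ B.1))^2 else 0)))/2 := by
        congr 1
        exact Finset.sum_congr rfl (fun A _ => Finset.sum_congr rfl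
          (fun B _ => (e0 A B).trans (e1 A B)))
    _ = ((∑ A : {s : Finset (Fin n) // s.card = k - 1},
          ∑ B : {s : Finset (Fin n) // s.card = k - 1},
          (if (tokenGraph n (k-1) G).Adj A B then
            (∑ v : Fin n, if v ∈ A.1 ∪ B.1 then 0 else
              (PhiFun n k φ (insert v A.1) - PhiFun n k φ (insert v B.1))^2) else 0))
        + 2 * (∑ A : {s : Finset (Fin n) // s.card = k - 1},
          ∑ B : {s : Finset (Fin n) // s.card = k - 1},
          (if (tokenGraph n (k-1) G).Adj A B then (PhiFun n k φ (A.1 ∪ B.1))^2 else 0)))/2 := by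
        congr 1
        rw [Finset.mul_sum]
        rw [← Finset.sum_add_distrib]
        apply Finset.sum_congr rfl
        intro A _
        rw [Finset.mul_sum, ← Finset.sum_add_distrib]
    _ ≤ ((∑ S : {s : Finset (Fin n) // s.card = k}, ∑ T : {s : Finset (Fin n) // s.card = k},
          (if (tokenGraph n k G).Adj S T then ((k:ℝ) - 1) * (φ S - φ T)^2 else 0))
        + 2 * ((k:ℝ) * ((k:ℝ) - 1) * (φ ⬝ᵥ φ)))/2 := by
        apply div_le_div_of_nonneg_right ?_ (by norm_num)
        exact add_le_add (le_of_eq (U1_eq hk G φ))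
          (mul_le_mul_of_nonneg_left (U2_le hk G φ) (by norm_num : (0:ℝ) ≤ 2))
    _ = ((k:ℝ) - 1) * ((lapTok n k G *ᵥ φ) ⬝ᵥ φ) + (k:ℝ) * ((k:ℝ) - 1) * (φ ⬝ᵥ φ) := by
        have hfact : (∑ S : {s : Finset (Fin n) // s.card = k},
            ∑ T : {s : Finset (Fin n) // s.card = k},
            (if (tokenGraph n k G).Adj S T then ((k:ℝ) - 1) * (φ S - φ T)^2 else 0))
            = ((k:ℝ) - 1) * ∑ S : {s : Finset (Fin n) // s.card = k},
                ∑ T : {s : Finset (Fin n) // s.card = k},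
                (if (tokenGraph n k G).Adj S T then (φ S - φ T)^2 else 0) := by
          rw [Finset.mul_sum]
          refine Finset.sum_congr rfl (fun S _ => ?_)
          rw [Finset.mul_sum]
          refine Finset.sum_congr rfl (fun T _ => ?_)
          split <;> simp
        rw [hfact, hQ1]
        ring
end AuxQuadBound

/-- If `λ` is an eigenvalue of `L_k(G)` with an eigenvector `φ` satisfying
`B_{n,k,k-1}ᵀ φ = 0`, then `λ ≥ (k/(k-1)) μ - k`, where `μ` is the minimum of the Rayleigh
quotient of `L_{k-1}(G)` over nonzero vectors `ψ` with `B_{n,k-1,k-2}ᵀ ψ = 0`. -/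
theorem lamMin_token_step (n k : ℕ) (G : SimpleGraph (Fin n)) (hk : 2 ≤ k) (hkn : k ≤ n / 2)
    (lam : ℝ) (φ : {s : Finset (Fin n) // s.card = k} → ℝ) (hφ0 : φ ≠ 0)
    (hφ : lapTok n k G *ᵥ φ = lam • φ) (hker : (inclMatrix n k (k - 1))ᵀ *ᵥ φ = 0)
    (μ : ℝ)
    (hμ : μ = sInf {r : ℝ | ∃ ψ : {s : Finset (Fin n) // s.card = k - 1} → ℝ,
      ψ ≠ 0 ∧ (inclMatrix n (k - 1) (k - 2))ᵀ *ᵥ ψ = 0 ∧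
        r = (lapTok n (k - 1) G *ᵥ ψ ⬝ᵥ ψ) / (ψ ⬝ᵥ ψ)}) :
    lam ≥ ((k : ℝ) / ((k : ℝ) - 1)) * μ - k := by
  classical
  have hφdp : 0 < φ ⬝ᵥ φ :=
    lt_of_le_of_ne (dp_self_nonneg φ)
      (fun h => hφ0 (dotProduct_self_eq_zero.mp h.symm))
  have hQφ : (lapTok n k G *ᵥ φ) ⬝ᵥ φ = lam * (φ ⬝ᵥ φ) := by
    rw [hφ]
    simp [smul_dotProduct, smul_eq_mul]
  have hbdd : BddBelow {r : ℝ | ∃ ψ : {s : Finset (Fin n) // s.card = k - 1} → ℝ,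
      ψ ≠ 0 ∧ (inclMatrix n (k - 1) (k - 2))ᵀ *ᵥ ψ = 0 ∧
        r = (lapTok n (k - 1) G *ᵥ ψ ⬝ᵥ ψ) / (ψ ⬝ᵥ ψ)} := by
    refine ⟨0, fun r hr => ?_⟩
    obtain ⟨ψ', hψ0, hψker, rfl⟩ := hr
    refine div_nonneg ?_ (dp_self_nonneg _)
    simp only [lapTok]
    exact lapQuad_nonneg _ _
  have hv_le : ∀ v : Fin n, μ * (psiFun n k φ v ⬝ᵥ psiFun n k φ v)
      ≤ (lapTok n (k-1) G *ᵥ psiFun n k φ v) ⬝ᵥ psiFun n k φ v := by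
    intro v
    by_cases h0 : psiFun n k φ v = 0
    · rw [h0]
      simp
    · have hpos : 0 < psiFun n k φ v ⬝ᵥ psiFun n k φ v :=
        lt_of_le_of_ne (dp_self_nonneg _)
          (fun h => h0 (dotProduct_self_eq_zero.mp h.symm))
      have hmem : ((lapTok n (k-1) G *ᵥ psiFun n k φ v) ⬝ᵥ psiFun n k φ v)
          / (psiFun n k φ v ⬝ᵥ psiFun n k φ v) ∈ {r : ℝ |
            ∃ ψ : {s : Finset (Fin n) // s.card = k - 1} → ℝ,
            ψ ≠ 0 ∧ (inclMatrix n (k - 1) (k - 2))ᵀ *ᵥ ψ = 0 ∧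
              r = (lapTok n (k - 1) G *ᵥ ψ ⬝ᵥ ψ) / (ψ ⬝ᵥ ψ)} :=
        ⟨psiFun n k φ v, h0, psi_kernel hk φ hker v, rfl⟩
      have hle : μ ≤ ((lapTok n (k-1) G *ᵥ psiFun n k φ v) ⬝ᵥ psiFun n k φ v)
          / (psiFun n k φ v ⬝ᵥ psiFun n k φ v) := hμ ▸ csInf_le hbdd hmem
      calc μ * (psiFun n k φ v ⬝ᵥ psiFun n k φ v)
          ≤ (((lapTok n (k-1) G *ᵥ psiFun n k φ v) ⬝ᵥ psiFun n k φ v)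
              / (psiFun n k φ v ⬝ᵥ psiFun n k φ v)) * (psiFun n k φ v ⬝ᵥ psiFun n k φ v) :=
            mul_le_mul_of_nonneg_right hle hpos.le
        _ = (lapTok n (k-1) G *ᵥ psiFun n k φ v) ⬝ᵥ psiFun n k φ v :=
            div_mul_cancel₀ _ hpos.ne'
  have hsum : μ * ((k:ℝ) * (φ ⬝ᵥ φ))
      ≤ ((k:ℝ) - 1) * (lam * (φ ⬝ᵥ φ)) + (k:ℝ) * ((k:ℝ) - 1) * (φ ⬝ᵥ φ) := by
    calc μ * ((k:ℝ) * (φ ⬝ᵥ φ))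
        = μ * ∑ v : Fin n, (psiFun n k φ v ⬝ᵥ psiFun n k φ v) := by rw [psi_norm hk φ]
      _ = ∑ v : Fin n, μ * (psiFun n k φ v ⬝ᵥ psiFun n k φ v) := Finset.mul_sum _ _ _
      _ ≤ ∑ v : Fin n, ((lapTok n (k-1) G *ᵥ psiFun n k φ v) ⬝ᵥ psiFun n k φ v) :=
          Finset.sum_le_sum (fun v _ => hv_le v)
      _ ≤ ((k:ℝ) - 1) * ((lapTok n k G *ᵥ φ) ⬝ᵥ φ) + (k:ℝ) * ((k:ℝ) - 1) * (φ ⬝ᵥ φ) :=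
          psi_quad_bound hk G φ
      _ = ((k:ℝ) - 1) * (lam * (φ ⬝ᵥ φ)) + (k:ℝ) * ((k:ℝ) - 1) * (φ ⬝ᵥ φ) := by rw [hQφ]
  have hk2 : (2:ℝ) ≤ (k:ℝ) := by exact_mod_cast hk
  have h2 : μ * (k:ℝ) ≤ ((k:ℝ) - 1) * lam + (k:ℝ) * ((k:ℝ) - 1) := by
    have h3 : (μ * (k:ℝ)) * (φ ⬝ᵥ φ)
        ≤ (((k:ℝ) - 1) * lam + (k:ℝ) * ((k:ℝ) - 1)) * (φ ⬝ᵥ φ) := by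
      linear_combination hsum
    exact le_of_mul_le_mul_right h3 hφdp
  have hK1 : (0:ℝ) < (k:ℝ) - 1 := by linarith
  rw [ge_iff_le, sub_le_iff_le_add, div_mul_eq_mul_div, div_le_iff₀ hK1]
  linear_combination h2
end
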